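/- arXiv:1302.3695 — 6 statements merged into one kernel-verified Lean document; each statement's English description precedes it below -/
import Mathlib

section
/- Let a, b > 0 and φ as in the Section 2 assumptions. Then the n-th moment satisfies ∫_{-a}^{b} φ(t) t^n dt = (-1)^n f₁(0) Γ(μ+1) n^{-μ-1} a^{n+μ+1} + f₂(0) Γ(ν+1) n^{-ν-1} b^{n+ν+1} + O(n^{-μ-2} a^n) + O(n^{-ν-2} b^n) as n → ∞. -/
section watson_helpers
open MeasureTheory Set Filter Asymptotics

lemma aux_intOn (q : ℝ) (hq : -1 < q) {r : ℝ} (hr : 1 ≤ r) :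
    IntegrableOn (fun u : ℝ => u ^ q * Real.exp (-(r * u))) (Ioi (0:ℝ)) := by
  have h1 : (0:ℝ) < q + 1 := by linarith
  have hg : IntegrableOn (fun u : ℝ => u ^ q * Real.exp (-u)) (Ioi (0:ℝ)) := by
    refine (Real.GammaIntegral_convergent h1).congr_fun (fun x hx => ?_) measurableSet_Ioi
    rw [add_sub_cancel_right]; ring
  refine hg.mono' ?_ ?_
  · refine (ContinuousOn.mul ?_ ?_).aestronglyMeasurable measurableSet_Ioi
    · exact fun x hx => (Real.continuousAt_rpow_const x q (Or.inl (ne_of_gt hx))).continuousWithinAt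
    · exact (Real.continuous_exp.comp (continuous_const.mul continuous_id).neg).continuousOn
  · filter_upwards [ae_restrict_mem measurableSet_Ioi] with u hu
    have hu0 : (0:ℝ) < u := hu
    have hexp : Real.exp (-(r*u)) ≤ Real.exp (-u) := by
      apply Real.exp_le_exp.mpr; nlinarith
    have h0 : (0:ℝ) ≤ u ^ q := le_of_lt (Real.rpow_pos_of_pos hu0 q)
    rw [Real.norm_eq_abs, abs_of_nonneg (by positivity)]
    exact mul_le_mul_of_nonneg_left hexp h0

lemma aux_int_val (q : ℝ) (hq : -1 < q) {r : ℝ} (hr : 0 < r) :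
    ∫ u in Ioi (0:ℝ), u ^ q * Real.exp (-(r * u)) = Real.Gamma (q+1) * r ^ (-(q+1)) := by
  have h := Real.integral_rpow_mul_exp_neg_mul_Ioi (show (0:ℝ) < q+1 by linarith) hr
  rw [add_sub_cancel_right] at h
  rw [h, mul_comm]
  congr 1
  rw [one_div, Real.inv_rpow hr.le, ← Real.rpow_neg hr.le]

lemma aux_ioc_le (s δ : ℝ) (hs : -1 < s) {n : ℕ} (hn : 1 ≤ n) :
    ∫ u in Ioc (0:ℝ) δ, u ^ s * Real.exp (-((n:ℝ) * u)) ≤ Real.Gamma (s+1) * (n:ℝ) ^ (-(s+1)) := by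
  have hr : (1:ℝ) ≤ (n:ℝ) := by exact_mod_cast hn
  have h0 : (0:ℝ) < n := by linarith
  rw [← aux_int_val s hs h0]
  refine setIntegral_mono_set (aux_intOn s hs hr) ?_ ?_
  · filter_upwards [ae_restrict_mem measurableSet_Ioi] with u hu
    have : (0:ℝ) < u := hu
    positivity
  · exact HasSubset.Subset.eventuallyLE Ioc_subset_Ioi_self

lemma aux_bound_step (s δ A : ℝ) (hs : -1 < s) (hA : 0 ≤ A) {n : ℕ} (hn : 1 ≤ n)
    {F : ℝ → ℂ}
    (hF : ∀ u ∈ Ioc (0:ℝ) δ, ‖F u‖ ≤ A * (u ^ s * Real.exp (-((n:ℝ) * u)))) :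
    ‖∫ u in Ioc (0:ℝ) δ, F u‖ ≤ A * (Real.Gamma (s+1) * (n:ℝ) ^ (-(s+1))) := by
  have hr : (1:ℝ) ≤ (n:ℝ) := by exact_mod_cast hn
  have hgint : IntegrableOn (fun u : ℝ => A * (u ^ s * Real.exp (-((n:ℝ)*u)))) (Ioc 0 δ) :=
    ((aux_intOn s hs hr).mono_set Ioc_subset_Ioi_self).const_mul A
  have h1 : ‖∫ u in Ioc (0:ℝ) δ, F u‖
      ≤ ∫ u in Ioc (0:ℝ) δ, A * (u ^ s * Real.exp (-((n:ℝ)*u))) := by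
    refine norm_integral_le_of_norm_le hgint ?_
    filter_upwards [ae_restrict_mem measurableSet_Ioc] with u hu using hF u hu
  refine h1.trans ?_
  rw [integral_const_mul]
  exact mul_le_mul_of_nonneg_left (aux_ioc_le s δ hs hn) hA

lemma aux_cexp_intOn (ν : ℂ) (hν : -1 < ν.re) {n : ℕ} (hn : 1 ≤ n) :
    IntegrableOn (fun u : ℝ => (u:ℂ) ^ ν * (Real.exp (-((n:ℝ) * u)) : ℂ)) (Ioi (0:ℝ)) := by
  have hr : (1:ℝ) ≤ (n:ℝ) := by exact_mod_cast hn
  refine (aux_intOn ν.re hν hr).mono' ?_ ?_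
  · refine (ContinuousOn.mul ?_ ?_).aestronglyMeasurable measurableSet_Ioi
    · exact fun x hx =>
        (Complex.continuousAt_ofReal_cpow_const x ν (Or.inr (ne_of_gt hx))).continuousWithinAt
    · exact (Complex.continuous_ofReal.comp
        (Real.continuous_exp.comp (continuous_const.mul continuous_id).neg)).continuousOn
  · filter_upwards [ae_restrict_mem measurableSet_Ioi] with u hu
    have hu0 : (0:ℝ) < u := hu
    rw [norm_mul, Complex.norm_cpow_eq_rpow_re_of_pos hu0,
      Complex.norm_real, Real.norm_eq_abs, abs_of_nonneg (Real.exp_pos _).le]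

lemma aux_cgamma (ν : ℂ) (hν : -1 < ν.re) {n : ℕ} (hn : 1 ≤ n) :
    ∫ u in Ioi (0:ℝ), (u:ℂ) ^ ν * (Real.exp (-((n:ℝ) * u)) : ℂ)
      = Complex.Gamma (ν + 1) * (n:ℂ) ^ (-ν - 1) := by
  have h0 : (0:ℝ) < (n:ℝ) := by
    have : (1:ℝ) ≤ (n:ℝ) := by exact_mod_cast hn
    linarith
  have hre : 0 < (ν + 1).re := by
    simp only [Complex.add_re, Complex.one_re]; linarith
  have h := Complex.integral_cpow_mul_exp_neg_mul_Ioi hre h0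
  rw [add_sub_cancel_right] at h
  have heq : (fun u : ℝ => (u:ℂ) ^ ν * (Real.exp (-((n:ℝ) * u)) : ℂ))
      = fun u : ℝ => (u:ℂ) ^ ν * Complex.exp (-(((n:ℝ):ℂ) * (u:ℂ))) := by
    funext u
    congr 1
    rw [Complex.ofReal_exp]
    congr 1
    push_cast
    ring
  rw [heq, h]
  have hne : ((n:ℝ):ℂ) ≠ 0 := by
    simp only [ne_eq, Complex.ofReal_eq_zero]; exact ne_of_gt h0
  have harg : ((n:ℝ):ℂ).arg ≠ Real.pi := by
    rw [Complex.arg_ofReal_of_nonneg h0.le]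
    exact Real.pi_ne_zero.symm
  rw [one_div, Complex.inv_cpow _ _ harg, ← Complex.cpow_neg]
  rw [mul_comm]
  norm_cast
  rw [show -(ν + 1) = -ν - 1 by ring]

lemma aux_pow_exp (u : ℝ) (hu0 : 0 ≤ u) (hu1 : u < 1) (n : ℕ) :
    (1-u)^n ≤ Real.exp (-((n:ℝ)*u)) := by
  have h1 : (0:ℝ) ≤ 1 - u := by linarith
  have h2 : 1 - u ≤ Real.exp (-u) := by linarith [Real.add_one_le_exp (-u)]
  calc (1-u)^n ≤ (Real.exp (-u))^n := pow_le_pow_left₀ h1 h2 n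
  _ = Real.exp (-((n:ℝ)*u)) := by rw [← Real.exp_nat_mul]; ring_nf

lemma aux_exp_sub_pow (u δ : ℝ) (hu0 : 0 < u) (huδ : u ≤ δ) (hδ1 : δ < 1) (n : ℕ) :
    Real.exp (-((n:ℝ)*u)) - (1-u)^n ≤ (n:ℝ) * (u^2 / (1-δ)) * Real.exp (-((n:ℝ)*u)) := by
  have hu1 : u < 1 := lt_of_le_of_lt huδ hδ1
  have h1u : (0:ℝ) < 1 - u := by linarith
  set r : ℝ := -Real.log (1-u) - u with hr
  have hrnn : 0 ≤ r := by
    have h := Real.log_le_sub_one_of_pos h1u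
    simp only [hr]; linarith
  have hrle : r ≤ u^2 / (1-δ) := by
    have hinv : (0:ℝ) < (1-u)⁻¹ := by positivity
    have h2 := Real.log_le_sub_one_of_pos hinv
    rw [Real.log_inv] at h2
    have h3 : (1-u)⁻¹ - 1 = u / (1-u) := by field_simp; ring
    have h4 : r ≤ u/(1-u) - u := by rw [hr]; rw [h3] at h2; linarith
    have h5 : u/(1-u) - u = u^2/(1-u) := by field_simp; ring
    have h6 : u^2/(1-u) ≤ u^2/(1-δ) := by
      apply div_le_div_of_nonneg_left (by positivity) (by linarith) (by linarith)
    linarith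
  have hpow : (1-u)^n = Real.exp (-((n:ℝ)*u)) * Real.exp (-((n:ℝ)*r)) := by
    rw [← Real.exp_add]
    have h7 : (1-u)^n = Real.exp ((n:ℝ) * Real.log (1-u)) := by
      rw [Real.exp_nat_mul, Real.exp_log h1u]
    rw [h7]; congr 1; rw [hr]; ring
  have hexp : 1 - Real.exp (-((n:ℝ)*r)) ≤ (n:ℝ)*r := by
    linarith [Real.add_one_le_exp (-((n:ℝ)*r))]
  have hE : (0:ℝ) < Real.exp (-((n:ℝ)*u)) := Real.exp_pos _
  have hnn : (0:ℝ) ≤ (n:ℝ) := Nat.cast_nonneg n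
  calc Real.exp (-((n:ℝ)*u)) - (1-u)^n
      = Real.exp (-((n:ℝ)*u)) * (1 - Real.exp (-((n:ℝ)*r))) := by rw [hpow]; ring
    _ ≤ Real.exp (-((n:ℝ)*u)) * ((n:ℝ)*r) := by
        apply mul_le_mul_of_nonneg_left hexp hE.le
    _ ≤ Real.exp (-((n:ℝ)*u)) * ((n:ℝ)*(u^2/(1-δ))) := by
        exact mul_le_mul_of_nonneg_left (mul_le_mul_of_nonneg_left hrle hnn) hE.le
    _ = (n:ℝ) * (u^2/(1-δ)) * Real.exp (-((n:ℝ)*u)) := by ring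

lemma aux_geo (A r0 m w : ℝ) (h0 : 0 ≤ r0) (hlt : r0 < m) :
    (fun n : ℕ => A * r0^n) =O[atTop] (fun n : ℕ => (n:ℝ)^w * m^n) := by
  have hm : 0 < m := lt_of_le_of_lt h0 hlt
  set ρ := r0 / m with hρ
  have hρ0 : 0 ≤ ρ := by positivity
  have hρ1 : ρ < 1 := (div_lt_one hm).mpr hlt
  set K := ⌈-w⌉₊ with hK
  have hT := tendsto_pow_const_mul_const_pow_of_lt_one K hρ0 hρ1
  have hev : ∀ᶠ n : ℕ in atTop, (n:ℝ)^K * ρ^n < 1 := hT.eventually_lt_const one_pos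
  rw [isBigO_iff]
  refine ⟨|A|, ?_⟩
  filter_upwards [hev, eventually_ge_atTop 1] with n h1 hn
  have hn1 : (1:ℝ) ≤ (n:ℝ) := by exact_mod_cast hn
  have hnpos : (0:ℝ) < (n:ℝ) := by linarith
  have hKpos : (0:ℝ) < (n:ℝ)^K := by positivity
  have hρn : ρ^n ≤ ((n:ℝ)^K)⁻¹ := by
    rw [← one_div, le_div_iff₀ hKpos]
    nlinarith
  have hw : ρ^n ≤ (n:ℝ)^w := by
    have h2 : ((n:ℝ)^K)⁻¹ = (n:ℝ)^(-(K:ℝ)) := by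
      rw [Real.rpow_neg hnpos.le, Real.rpow_natCast]
    have h3 : (n:ℝ)^(-(K:ℝ)) ≤ (n:ℝ)^w := by
      apply Real.rpow_le_rpow_of_exponent_le hn1
      have := Nat.le_ceil (-w)
      simp only [hK]
      linarith
    calc ρ^n ≤ ((n:ℝ)^K)⁻¹ := hρn
    _ = _ := h2
    _ ≤ _ := h3
  rw [Real.norm_eq_abs, Real.norm_eq_abs, abs_mul, abs_pow, abs_of_nonneg h0,
    abs_of_nonneg (by positivity : (0:ℝ) ≤ (n:ℝ)^w * m^n)]
  have hr0 : r0 = ρ * m := by rw [hρ, div_mul_cancel₀ _ hm.ne']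
  calc |A| * r0^n = |A| * (ρ^n * m^n) := by rw [hr0, mul_pow]
  _ ≤ |A| * ((n:ℝ)^w * m^n) := by
      exact mul_le_mul_of_nonneg_left
        (mul_le_mul_of_nonneg_right hw (by positivity)) (abs_nonneg A)

lemma aux_neg_one_pow {h : ℕ → ℂ} {g : ℕ → ℝ} (hO : h =O[atTop] g) :
    (fun n : ℕ => (-1:ℂ)^n * h n) =O[atTop] g := by
  refine IsBigO.trans ?_ hO
  apply Asymptotics.isBigO_of_le
  intro n
  rw [norm_mul, norm_pow, norm_neg, norm_one, one_pow, one_mul]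

lemma core_unit (ν : ℂ) (hν : -1 < ν.re) (g : ℝ → ℂ) (δ M : ℝ)
    (hδ0 : 0 < δ) (hδ1 : δ < 1)
    (hg : ∀ u ∈ Icc (0:ℝ) δ, ‖g u - g 0‖ ≤ M * u)
    (hgi : ∀ n : ℕ, IntegrableOn (fun u : ℝ => (u:ℂ) ^ ν * g u * ((1 - u : ℝ) : ℂ) ^ n)
      (Ioc 0 δ) volume) :
    (fun n : ℕ => (∫ u in Ioc (0:ℝ) δ, (u:ℂ) ^ ν * g u * ((1 - u : ℝ) : ℂ) ^ n)
        - g 0 * Complex.Gamma (ν + 1) * (n:ℂ) ^ (-ν - 1))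
      =O[atTop] (fun n : ℕ => (n:ℝ) ^ (-ν.re - 2)) := by
  have hM : 0 ≤ M := by
    have h := hg δ ⟨hδ0.le, le_rfl⟩
    nlinarith [norm_nonneg (g δ - g 0)]
  have hpowP : ∀ n : ℕ,
      IntegrableOn (fun u : ℝ => (u:ℂ) ^ ν * ((1 - u:ℝ):ℂ) ^ n) (Ioc 0 δ) volume := by
    intro n
    have h1 : IntervalIntegrable (fun x : ℝ => (x:ℂ) ^ ν) volume 0 δ := intervalIntegral.intervalIntegrable_cpow' hν
    have hc : ContinuousOn (fun u : ℝ => ((1 - u:ℝ):ℂ) ^ n) (Set.uIcc 0 δ) :=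
      ((Complex.continuous_ofReal.comp (continuous_const.sub continuous_id)).pow n).continuousOn
    exact (intervalIntegrable_iff_integrableOn_Ioc_of_le hδ0.le).mp (h1.mul_continuousOn hc)
  have hA : (fun n : ℕ => ∫ u in Ioc (0:ℝ) δ, (u:ℂ)^ν * (g u - g 0) * ((1-u:ℝ):ℂ)^n)
      =O[atTop] (fun n : ℕ => (n:ℝ) ^ (-ν.re - 2)) := by
    rw [isBigO_iff]
    refine ⟨M * Real.Gamma (ν.re+1+1), ?_⟩
    filter_upwards [eventually_ge_atTop 1] with n hn
    have hn1 : (1:ℝ) ≤ (n:ℝ) := by exact_mod_cast hn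
    have hb := aux_bound_step (ν.re+1) δ M (by linarith) hM hn
      (F := fun u : ℝ => (u:ℂ)^ν * (g u - g 0) * ((1-u:ℝ):ℂ)^n) ?_
    · rw [Real.norm_eq_abs, abs_of_nonneg (Real.rpow_nonneg (by linarith) _)]
      refine hb.trans (le_of_eq ?_)
      rw [show -(ν.re+1+1) = -ν.re-2 by ring]; ring
    · intro u hu
      have hu0 : (0:ℝ) < u := hu.1
      have huδ : u ≤ δ := hu.2
      have hu1 : u < 1 := lt_of_le_of_lt huδ hδ1
      rw [norm_mul, norm_mul, norm_pow, 
        Complex.norm_cpow_eq_rpow_re_of_pos hu0, Complex.norm_real, Real.norm_eq_abs,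
        abs_of_nonneg (by linarith : (0:ℝ) ≤ 1-u)]
      have hgu := hg u ⟨hu0.le, huδ⟩
      have hp := aux_pow_exp u hu0.le hu1 n
      have e1 : u ^ ν.re * (M*u) * Real.exp (-((n:ℝ)*u))
          = M * (u^(ν.re+1) * Real.exp (-((n:ℝ)*u))) := by
        rw [Real.rpow_add_one hu0.ne']; ring
      calc u ^ ν.re * ‖g u - g 0‖ * (1-u)^n
          ≤ u ^ ν.re * (M*u) * Real.exp (-((n:ℝ)*u)) := by
            apply mul_le_mul (mul_le_mul_of_nonneg_left hgu (Real.rpow_nonneg hu0.le _)) hp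
              (pow_nonneg (by linarith) n)
              (mul_nonneg (Real.rpow_nonneg hu0.le _) (mul_nonneg hM hu0.le))
      _ = _ := e1
  have hB : (fun n : ℕ => g 0 *
        ∫ u in Ioc (0:ℝ) δ, (u:ℂ)^ν * (((1-u:ℝ):ℂ)^n - (Real.exp (-((n:ℝ)*u)) : ℂ)))
      =O[atTop] (fun n : ℕ => (n:ℝ) ^ (-ν.re - 2)) := by
    rw [isBigO_iff]
    refine ⟨‖g 0‖ * (Real.Gamma (ν.re+2+1) / (1-δ)), ?_⟩
    filter_upwards [eventually_ge_atTop 1] with n hn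
    have hn1 : (1:ℝ) ≤ (n:ℝ) := by exact_mod_cast hn
    have hnpos : (0:ℝ) < (n:ℝ) := by linarith
    have h1δ : (0:ℝ) < 1 - δ := by linarith
    have hb := aux_bound_step (ν.re+2) δ ((n:ℝ)/(1-δ)) (by linarith) (by positivity) hn
      (F := fun u : ℝ => (u:ℂ)^ν * (((1-u:ℝ):ℂ)^n - (Real.exp (-((n:ℝ)*u)) : ℂ))) ?_
    · rw [norm_mul, Real.norm_eq_abs, abs_of_nonneg (Real.rpow_nonneg (by linarith) _)]
      have hc := mul_le_mul_of_nonneg_left hb (norm_nonneg (g 0))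
      refine hc.trans (le_of_eq ?_)
      have hx : (n:ℝ) * (n:ℝ)^(-(ν.re+2+1)) = (n:ℝ)^(-ν.re-2) := by
        nth_rewrite 1 [← Real.rpow_one (n:ℝ)]
        rw [← Real.rpow_add hnpos]; congr 1; ring
      rw [show (n:ℝ) / (1-δ) * (Real.Gamma (ν.re+2+1) * (n:ℝ)^(-(ν.re+2+1)))
          = Real.Gamma (ν.re+2+1)/(1-δ) * ((n:ℝ) * (n:ℝ)^(-(ν.re+2+1))) by ring, hx]
      ring
    · intro u hu
      have hu0 : (0:ℝ) < u := hu.1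
      have huδ : u ≤ δ := hu.2
      have hu1 : u < 1 := lt_of_le_of_lt huδ hδ1
      have hdr : ((1-u:ℝ):ℂ)^n - (Real.exp (-((n:ℝ)*u)) : ℂ)
          = ((((1-u)^n - Real.exp (-((n:ℝ)*u))) : ℝ) : ℂ) := by push_cast; ring
      rw [norm_mul, hdr, Complex.norm_cpow_eq_rpow_re_of_pos hu0,
        Complex.norm_real, Real.norm_eq_abs, abs_sub_comm,
        abs_of_nonneg (by linarith [aux_pow_exp u hu0.le hu1 n] :
          (0:ℝ) ≤ Real.exp (-((n:ℝ)*u)) - (1-u)^n)]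
      have hkey := aux_exp_sub_pow u δ hu0 huδ hδ1 n
      have hu2 : u ^ (ν.re+2) = u^ν.re * u^(2:ℕ) := by
        rw [Real.rpow_add hu0, show ((2:ℝ)) = ((2:ℕ):ℝ) by norm_num, Real.rpow_natCast]
      have e2 : u ^ ν.re * ((n:ℝ) * (u^2/(1-δ)) * Real.exp (-((n:ℝ)*u)))
          = (n:ℝ)/(1-δ) * (u^(ν.re+2) * Real.exp (-((n:ℝ)*u))) := by
        rw [hu2]; ring
      calc u ^ ν.re * (Real.exp (-((n:ℝ)*u)) - (1-u)^n)
          ≤ u ^ ν.re * ((n:ℝ) * (u^2/(1-δ)) * Real.exp (-((n:ℝ)*u))) :=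
            mul_le_mul_of_nonneg_left hkey (Real.rpow_nonneg hu0.le _)
      _ = _ := e2
  have hC : (fun n : ℕ => -(g 0 * ∫ u in Ioi δ, (u:ℂ)^ν * (Real.exp (-((n:ℝ)*u)) : ℂ)))
      =O[atTop] (fun n : ℕ => (n:ℝ) ^ (-ν.re - 2)) := by
    have hΓ : (0:ℝ) < Real.Gamma (ν.re+1) := Real.Gamma_pos_of_pos (by linarith)
    have hdec : ∀ᶠ n : ℕ in atTop, Real.exp (-((n:ℝ)*δ)) ≤ (n:ℝ)^(-ν.re-2) := by
      set K := ⌈ν.re+2⌉₊ with hK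
      have hρ1 : Real.exp (-δ) < 1 := by
        rw [← Real.exp_zero]; exact Real.exp_lt_exp.mpr (by linarith)
      have hT := tendsto_pow_const_mul_const_pow_of_lt_one K (Real.exp_pos _).le hρ1
      have hev := hT.eventually_lt_const one_pos
      filter_upwards [hev, eventually_ge_atTop 1] with n h1 hn
      have hn1 : (1:ℝ) ≤ (n:ℝ) := by exact_mod_cast hn
      have hnpos : (0:ℝ) < (n:ℝ) := by linarith
      have hKpos : (0:ℝ) < (n:ℝ)^K := by positivity
      have heq : (Real.exp (-δ))^n = Real.exp (-((n:ℝ)*δ)) := by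
        rw [← Real.exp_nat_mul]; ring_nf
      rw [← heq]
      have h2 : (Real.exp (-δ))^n ≤ ((n:ℝ)^K)⁻¹ := by
        rw [← one_div, le_div_iff₀ hKpos]; nlinarith
      have h3 : ((n:ℝ)^K)⁻¹ ≤ (n:ℝ)^(-ν.re-2) := by
        rw [show ((n:ℝ)^K)⁻¹ = (n:ℝ)^(-(K:ℝ)) by rw [Real.rpow_neg hnpos.le, Real.rpow_natCast]]
        apply Real.rpow_le_rpow_of_exponent_le hn1
        have := Nat.le_ceil (ν.re+2)
        simp only [hK]; linarith
      linarith
    rw [isBigO_iff]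
    refine ⟨‖g 0‖ * (Real.exp δ * Real.Gamma (ν.re+1)), ?_⟩
    filter_upwards [hdec, eventually_ge_atTop 1] with n hdn hn
    have hn1 : (1:ℝ) ≤ (n:ℝ) := by exact_mod_cast hn
    rw [norm_neg, norm_mul]
    have hgone : IntegrableOn (fun u : ℝ => u ^ ν.re * Real.exp (-u)) (Ioi (0:ℝ)) := by
      have := aux_intOn ν.re hν (le_refl (1:ℝ))
      simpa using this
    have hgInt : IntegrableOn (fun u : ℝ =>
        (Real.exp δ * Real.exp (-((n:ℝ)*δ))) * (u ^ ν.re * Real.exp (-u))) (Ioi δ) :=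
      ((hgone.mono_set (Ioi_subset_Ioi hδ0.le)).const_mul _)
    have hIle : ‖∫ u in Ioi δ, (u:ℂ)^ν * (Real.exp (-((n:ℝ)*u)) : ℂ)‖
        ≤ ∫ u in Ioi δ, (Real.exp δ * Real.exp (-((n:ℝ)*δ))) * (u ^ ν.re * Real.exp (-u)) := by
      refine norm_integral_le_of_norm_le hgInt ?_
      filter_upwards [ae_restrict_mem measurableSet_Ioi] with u hu
      have huδ : δ < u := hu
      have hu0 : (0:ℝ) < u := lt_trans hδ0 huδ
      rw [norm_mul, Complex.norm_cpow_eq_rpow_re_of_pos hu0,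
        Complex.norm_real, Real.norm_eq_abs, abs_of_nonneg (Real.exp_pos _).le]
      have hee : Real.exp (-((n:ℝ)*u)) ≤ Real.exp δ * Real.exp (-((n:ℝ)*δ)) * Real.exp (-u) := by
        rw [← Real.exp_add, ← Real.exp_add]
        apply Real.exp_le_exp.mpr
        nlinarith [mul_nonneg (by linarith : (0:ℝ) ≤ (n:ℝ)-1) (by linarith : (0:ℝ) ≤ u - δ)]
      calc u ^ ν.re * Real.exp (-((n:ℝ)*u))
          ≤ u ^ ν.re * (Real.exp δ * Real.exp (-((n:ℝ)*δ)) * Real.exp (-u)) :=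
            mul_le_mul_of_nonneg_left hee (Real.rpow_nonneg hu0.le _)
      _ = (Real.exp δ * Real.exp (-((n:ℝ)*δ))) * (u ^ ν.re * Real.exp (-u)) := by ring
    have hval : (∫ u in Ioi δ, (Real.exp δ * Real.exp (-((n:ℝ)*δ))) * (u ^ ν.re * Real.exp (-u)))
        = (Real.exp δ * Real.exp (-((n:ℝ)*δ))) * ∫ u in Ioi δ, (u ^ ν.re * Real.exp (-u)) :=
      integral_const_mul _ _
    have htail : (∫ u in Ioi δ, (u ^ ν.re * Real.exp (-u))) ≤ Real.Gamma (ν.re+1) := by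
      have hval0 : (∫ u in Ioi (0:ℝ), u ^ ν.re * Real.exp (-u)) = Real.Gamma (ν.re+1) := by
        have := aux_int_val ν.re hν one_pos
        simpa using this
      rw [← hval0]
      refine setIntegral_mono_set hgone ?_ (HasSubset.Subset.eventuallyLE (Ioi_subset_Ioi hδ0.le))
      filter_upwards [ae_restrict_mem measurableSet_Ioi] with u hu
      have : (0:ℝ) < u := hu
      positivity
    have hnn : (0:ℝ) ≤ Real.exp δ * Real.exp (-((n:ℝ)*δ)) := by positivity
    have hfinal : ‖∫ u in Ioi δ, (u:ℂ)^ν * (Real.exp (-((n:ℝ)*u)) : ℂ)‖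
        ≤ Real.exp δ * Real.Gamma (ν.re+1) * Real.exp (-((n:ℝ)*δ)) := by
      refine hIle.trans ?_
      rw [hval]
      calc (Real.exp δ * Real.exp (-((n:ℝ)*δ))) * ∫ u in Ioi δ, (u ^ ν.re * Real.exp (-u))
          ≤ (Real.exp δ * Real.exp (-((n:ℝ)*δ))) * Real.Gamma (ν.re+1) :=
            mul_le_mul_of_nonneg_left htail hnn
      _ = _ := by ring
    rw [Real.norm_eq_abs, abs_of_nonneg (Real.rpow_nonneg (by positivity) _)]
    calc ‖g 0‖ * ‖∫ u in Ioi δ, (u:ℂ)^ν * (Real.exp (-((n:ℝ)*u)) : ℂ)‖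
        ≤ ‖g 0‖ * (Real.exp δ * Real.Gamma (ν.re+1) * Real.exp (-((n:ℝ)*δ))) :=
          mul_le_mul_of_nonneg_left hfinal (norm_nonneg _)
    _ ≤ ‖g 0‖ * (Real.exp δ * Real.Gamma (ν.re+1) * (n:ℝ)^(-ν.re-2)) := by
        apply mul_le_mul_of_nonneg_left (mul_le_mul_of_nonneg_left hdn
          (mul_nonneg (Real.exp_pos _).le hΓ.le)) (norm_nonneg _)
    _ = ‖g 0‖ * (Real.exp δ * Real.Gamma (ν.re+1)) * (n:ℝ)^(-ν.re-2) := by ring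
  have hident : ∀ n : ℕ, 1 ≤ n →
      (∫ u in Ioc (0:ℝ) δ, (u:ℂ)^ν * g u * ((1-u:ℝ):ℂ)^n)
          - g 0 * Complex.Gamma (ν+1) * (n:ℂ)^(-ν-1)
        = (∫ u in Ioc (0:ℝ) δ, (u:ℂ)^ν * (g u - g 0) * ((1-u:ℝ):ℂ)^n)
          + g 0 * (∫ u in Ioc (0:ℝ) δ, (u:ℂ)^ν * (((1-u:ℝ):ℂ)^n - (Real.exp (-((n:ℝ)*u)) : ℂ)))
          + -(g 0 * ∫ u in Ioi δ, (u:ℂ)^ν * (Real.exp (-((n:ℝ)*u)) : ℂ)) := by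
    intro n hn
    have hEIoi := aux_cexp_intOn ν hν hn
    have hEIoc : IntegrableOn (fun u : ℝ => (u:ℂ)^ν * (Real.exp (-((n:ℝ)*u)):ℂ))
        (Ioc 0 δ) volume := hEIoi.mono_set Ioc_subset_Ioi_self
    have hEIoi' : IntegrableOn (fun u : ℝ => (u:ℂ)^ν * (Real.exp (-((n:ℝ)*u)):ℂ))
        (Ioi δ) volume := hEIoi.mono_set (Ioi_subset_Ioi hδ0.le)
    have hsplitE : (∫ u in Ioi (0:ℝ), (u:ℂ)^ν * (Real.exp (-((n:ℝ)*u)):ℂ))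
        = (∫ u in Ioc (0:ℝ) δ, (u:ℂ)^ν * (Real.exp (-((n:ℝ)*u)):ℂ))
          + ∫ u in Ioi δ, (u:ℂ)^ν * (Real.exp (-((n:ℝ)*u)):ℂ) := by
      rw [← Ioc_union_Ioi_eq_Ioi hδ0.le]
      exact setIntegral_union (Ioc_disjoint_Ioi le_rfl) measurableSet_Ioi hEIoc hEIoi'
    have e1 : (∫ u in Ioc (0:ℝ) δ, (u:ℂ)^ν * (g u - g 0) * ((1-u:ℝ):ℂ)^n)
        = (∫ u in Ioc (0:ℝ) δ, (u:ℂ)^ν * g u * ((1-u:ℝ):ℂ)^n)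
          - g 0 * ∫ u in Ioc (0:ℝ) δ, (u:ℂ)^ν * ((1-u:ℝ):ℂ)^n := by
      rw [← integral_const_mul, ← integral_sub (hgi n) ((hpowP n).const_mul (g 0))]
      congr 1; funext u; ring
    have e2 : (∫ u in Ioc (0:ℝ) δ, (u:ℂ)^ν * (((1-u:ℝ):ℂ)^n - (Real.exp (-((n:ℝ)*u)) : ℂ)))
        = (∫ u in Ioc (0:ℝ) δ, (u:ℂ)^ν * ((1-u:ℝ):ℂ)^n)
          - ∫ u in Ioc (0:ℝ) δ, (u:ℂ)^ν * (Real.exp (-((n:ℝ)*u)) : ℂ) := by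
      rw [← integral_sub (hpowP n) hEIoc]
      congr 1; funext u; ring
    have hgam := aux_cgamma ν hν hn
    rw [e1, e2, mul_assoc (g 0), ← hgam, hsplitE]
    ring
  have heq : (fun n : ℕ => (∫ u in Ioc (0:ℝ) δ, (u:ℂ)^ν * g u * ((1-u:ℝ):ℂ)^n)
      - g 0 * Complex.Gamma (ν+1) * (n:ℂ)^(-ν-1))
      =ᶠ[atTop] (fun n : ℕ =>
        (∫ u in Ioc (0:ℝ) δ, (u:ℂ)^ν * (g u - g 0) * ((1-u:ℝ):ℂ)^n)
          + g 0 * (∫ u in Ioc (0:ℝ) δ, (u:ℂ)^ν * (((1-u:ℝ):ℂ)^n - (Real.exp (-((n:ℝ)*u)) : ℂ)))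
          + -(g 0 * ∫ u in Ioi δ, (u:ℂ)^ν * (Real.exp (-((n:ℝ)*u)) : ℂ))) := by
    filter_upwards [eventually_ge_atTop 1] with n hn using hident n hn
  exact heq.trans_isBigO ((hA.add hB).add hC)

lemma core_scaled (ν : ℂ) (hν : -1 < ν.re) (g : ℝ → ℂ) (c δ M : ℝ)
    (hc : 0 < c) (hδ0 : 0 < δ) (hδc : δ < c)
    (hg : ∀ s ∈ Icc (0:ℝ) δ, ‖g s - g 0‖ ≤ M * s)
    (hgi : ∀ n : ℕ, IntegrableOn (fun s : ℝ => (s:ℂ) ^ ν * g s * ((c - s : ℝ) : ℂ) ^ n)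
        (Ioc 0 δ) volume) :
    (fun n : ℕ => (∫ s in Ioc (0:ℝ) δ, (s:ℂ) ^ ν * g s * ((c - s : ℝ) : ℂ) ^ n)
        - g 0 * Complex.Gamma (ν + 1) * (n:ℂ) ^ (-ν - 1) * ((c:ℝ):ℂ) ^ ((n:ℂ) + ν + 1))
      =O[atTop] (fun n : ℕ => (n:ℝ) ^ (-ν.re - 2) * c ^ n) := by
  have hcC : ((c:ℝ):ℂ) ≠ 0 := by exact_mod_cast hc.ne'
  set g' : ℝ → ℂ := fun u => g (c*u) with hg'def
  have hδ'0 : 0 < δ/c := by positivity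
  have hδ'1 : δ/c < 1 := (div_lt_one hc).mpr hδc
  have hg'0 : g' 0 = g 0 := by simp [hg'def]
  have hLip' : ∀ u ∈ Icc (0:ℝ) (δ/c), ‖g' u - g' 0‖ ≤ (M*c) * u := by
    intro u hu
    have h2 : c*u ≤ δ := by
      have h := (le_div_iff₀ hc).mp hu.2
      calc c*u = u*c := by ring
      _ ≤ δ := h
    have h3 := hg (c*u) ⟨mul_nonneg hc.le hu.1, h2⟩
    rw [hg'0]
    simp only [hg'def]
    calc ‖g (c*u) - g 0‖ ≤ M * (c*u) := h3
    _ = (M*c)*u := by ring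
  have hcν : ((c:ℝ):ℂ)^ν ≠ 0 := by
    intro h
    have h5 := Complex.norm_cpow_eq_rpow_re_of_pos hc ν
    rw [h, norm_zero] at h5
    exact absurd h5.symm (ne_of_gt (Real.rpow_pos_of_pos hc ν.re))
  have hcn : ∀ n : ℕ, ((c:ℝ):ℂ)^n ≠ 0 := fun n => pow_ne_zero n hcC
  have hgi' : ∀ n : ℕ, IntegrableOn (fun u : ℝ => (u:ℂ) ^ ν * g' u * ((1 - u : ℝ) : ℂ) ^ n)
      (Ioc 0 (δ/c)) volume := by
    intro n
    have h1 : IntervalIntegrable (fun s : ℝ => (s:ℂ)^ν * g s * ((c-s:ℝ):ℂ)^n) volume 0 δ :=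
      (intervalIntegrable_iff_integrableOn_Ioc_of_le hδ0.le).mpr (hgi n)
    have h2 := h1.comp_mul_left (c := c)
    rw [zero_div] at h2
    have h3 : IntegrableOn
        (fun u : ℝ => ((c*u:ℝ):ℂ)^ν * g (c*u) * ((c - c*u:ℝ):ℂ)^n) (Ioc 0 (δ/c)) volume :=
      (intervalIntegrable_iff_integrableOn_Ioc_of_le hδ'0.le).mp h2
    have h4 : IntegrableOn (fun u : ℝ => ((((c:ℝ):ℂ)^ν)⁻¹ * (((c:ℝ):ℂ)^n)⁻¹) * (((c*u:ℝ):ℂ)^ν * g (c*u) * ((c - c*u:ℝ):ℂ)^n)) (Ioc 0 (δ/c)) volume := h3.const_mul _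
    refine IntegrableOn.congr_fun h4 (fun u hu => ?_) measurableSet_Ioc
    have hu0 : (0:ℝ) < u := hu.1
    have e1 : ((c*u:ℝ):ℂ)^ν = ((c:ℝ):ℂ)^ν * ((u:ℝ):ℂ)^ν := by
      rw [Complex.ofReal_mul]; exact Complex.mul_cpow_ofReal_nonneg hc.le hu0.le ν
    have e2 : ((c - c*u:ℝ):ℂ)^n = ((c:ℝ):ℂ)^n * ((1-u:ℝ):ℂ)^n := by
      rw [show (c - c*u : ℝ) = c * (1-u) by ring]
      push_cast
      rw [mul_pow]
    rw [e1, e2]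
    simp only [hg'def]
    field_simp
  have hval : ∀ n : ℕ, (∫ s in Ioc (0:ℝ) δ, (s:ℂ)^ν * g s * ((c-s:ℝ):ℂ)^n)
      = ((c:ℝ):ℂ)^(ν+1) * ((c:ℝ):ℂ)^n
          * ∫ u in Ioc (0:ℝ) (δ/c), (u:ℂ)^ν * g' u * ((1-u:ℝ):ℂ)^n := by
    intro n
    have h1 := intervalIntegral.smul_integral_comp_mul_left
      (f := fun s : ℝ => (s:ℂ)^ν * g s * ((c-s:ℝ):ℂ)^n) (a := 0) (b := δ/c) c
    rw [mul_zero, show c*(δ/c) = δ by field_simp] at h1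
    rw [intervalIntegral.integral_of_le hδ0.le, intervalIntegral.integral_of_le hδ'0.le] at h1
    rw [← h1]
    have h2 : Set.EqOn (fun u : ℝ => ((c*u:ℝ):ℂ)^ν * g (c*u) * ((c - c*u:ℝ):ℂ)^n)
        (fun u : ℝ => (((c:ℝ):ℂ)^ν * ((c:ℝ):ℂ)^n) * ((u:ℂ)^ν * g' u * ((1-u:ℝ):ℂ)^n))
        (Ioc 0 (δ/c)) := by
      intro u hu
      have e1 : ((c*u:ℝ):ℂ)^ν = ((c:ℝ):ℂ)^ν * ((u:ℝ):ℂ)^ν := by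
        rw [Complex.ofReal_mul]; exact Complex.mul_cpow_ofReal_nonneg hc.le hu.1.le ν
      have e2 : ((c - c*u:ℝ):ℂ)^n = ((c:ℝ):ℂ)^n * ((1-u:ℝ):ℂ)^n := by
        rw [show (c - c*u : ℝ) = c * (1-u) by ring]
        push_cast
        rw [mul_pow]
      simp only [e1, e2, hg'def]
      ring
    have e3 : ((c:ℝ):ℂ)^(ν+1) = ((c:ℝ):ℂ)^ν * ((c:ℝ):ℂ) := by
      rw [Complex.cpow_add _ _ hcC, Complex.cpow_one]
    rw [setIntegral_congr_fun measurableSet_Ioc h2, integral_const_mul, Complex.real_smul, e3]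
    ring
  have hcpow : ∀ n : ℕ, ((c:ℝ):ℂ)^((n:ℂ)+ν+1) = ((c:ℝ):ℂ)^n * ((c:ℝ):ℂ)^(ν+1) := by
    intro n
    rw [show ((n:ℂ)+ν+1) = (n:ℂ) + (ν+1) by ring, Complex.cpow_add _ _ hcC,
      Complex.cpow_natCast]
  have hcore := core_unit ν hν g' (δ/c) (M*c) hδ'0 hδ'1 hLip' hgi'
  rw [hg'0] at hcore
  have hfactor : (fun n : ℕ => (∫ s in Ioc (0:ℝ) δ, (s:ℂ)^ν * g s * ((c-s:ℝ):ℂ)^n)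
      - g 0 * Complex.Gamma (ν+1) * (n:ℂ)^(-ν-1) * ((c:ℝ):ℂ)^((n:ℂ)+ν+1))
      = fun n : ℕ => ((∫ u in Ioc (0:ℝ) (δ/c), (u:ℂ)^ν * g' u * ((1-u:ℝ):ℂ)^n)
          - g 0 * Complex.Gamma (ν+1) * (n:ℂ)^(-ν-1)) * (((c:ℝ):ℂ)^(ν+1) * ((c:ℝ):ℂ)^n) := by
    funext n
    rw [hval n, hcpow n]
    ring
  rw [hfactor]
  have h2 : (fun n : ℕ => ((c:ℝ):ℂ)^(ν+1) * ((c:ℝ):ℂ)^n) =O[atTop] (fun n : ℕ => c^n) := by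
    rw [isBigO_iff]
    refine ⟨‖((c:ℝ):ℂ)^(ν+1)‖, ?_⟩
    filter_upwards with n
    rw [norm_mul, norm_pow, Complex.norm_real, Real.norm_eq_abs, abs_of_nonneg hc.le,
      Real.norm_eq_abs, abs_pow, abs_of_nonneg hc.le]
  exact hcore.mul h2

end watson_helpers

open MeasureTheory intervalIntegral Complex Filter Asymptotics
open Set

/-- Moment asymptotics: contribution of both endpoints.  -/
theorem moment_asymptotics
    (a b : ℝ) (ha : 0 < a) (hb : 0 < b)
    (μ ν : ℂ) (hμ : -1 < μ.re) (hν : -1 < ν.re)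
    (φ f₁ f₂ : ℝ → ℂ)
    (hint : IntervalIntegrable φ volume (-a) b)
    (hφ₁ : ∀ t ∈ Set.Icc (-a) b, φ t = ((t + a : ℝ) : ℂ) ^ μ * f₁ (t + a))
    (hφ₂ : ∀ t ∈ Set.Icc (-a) b, φ t = ((b - t : ℝ) : ℂ) ^ ν * f₂ (b - t))
    (hf₁0 : f₁ 0 ≠ 0) (hf₂0 : f₂ 0 ≠ 0)
    (hf₁ : ∃ δ > (0 : ℝ), (∀ t ∈ Set.Icc (0 : ℝ) δ, DifferentiableAt ℝ f₁ t) ∧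
          ∃ M : ℝ, ∀ t ∈ Set.Icc (0 : ℝ) δ, ‖deriv f₁ t‖ ≤ M)
    (hf₂ : ∃ δ > (0 : ℝ), (∀ t ∈ Set.Icc (0 : ℝ) δ, DifferentiableAt ℝ f₂ t) ∧
          ∃ M : ℝ, ∀ t ∈ Set.Icc (0 : ℝ) δ, ‖deriv f₂ t‖ ≤ M) :
    (fun n : ℕ =>
        (∫ t in (-a)..b, φ t * (t : ℂ) ^ n) -
          ((-1) ^ n * f₁ 0 * Complex.Gamma (μ + 1) * (n : ℂ) ^ (-μ - 1) *
              (a : ℂ) ^ ((n : ℂ) + μ + 1) +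
            f₂ 0 * Complex.Gamma (ν + 1) * (n : ℂ) ^ (-ν - 1) *
              (b : ℂ) ^ ((n : ℂ) + ν + 1)))
      =O[atTop]
      (fun n : ℕ => ‖((n : ℂ) ^ (-μ - 2))‖ * a ^ n + ‖((n : ℂ) ^ (-ν - 2))‖ * b ^ n) := by
  obtain ⟨δ₁, hδ₁0, hdiff₁, M₁, hM₁⟩ := hf₁
  obtain ⟨δ₂, hδ₂0, hdiff₂, M₂, hM₂⟩ := hf₂
  have hLipgen : ∀ (f : ℝ → ℂ) (δ M : ℝ), 0 < δ →
      (∀ t ∈ Set.Icc (0:ℝ) δ, DifferentiableAt ℝ f t) →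
      (∀ t ∈ Set.Icc (0:ℝ) δ, ‖deriv f t‖ ≤ M) →
      ∀ s ∈ Set.Icc (0:ℝ) δ, ‖f s - f 0‖ ≤ M * s := by
    intro f δ M hδ hdiff hbound s hs
    have h1 : DifferentiableOn ℝ f (Set.Icc 0 δ) :=
      fun x hx => (hdiff x hx).differentiableWithinAt
    have h2 : ∀ x ∈ Set.Ico (0:ℝ) δ, ‖derivWithin f (Set.Icc 0 δ) x‖ ≤ M := by
      intro x hx
      rw [(hdiff x (Set.Ico_subset_Icc_self hx)).derivWithin
        ((uniqueDiffOn_Icc hδ) x (Set.Ico_subset_Icc_self hx))]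
      exact hbound x (Set.Ico_subset_Icc_self hx)
    have h3 := norm_image_sub_le_of_norm_deriv_le_segment h1 h2 s hs
    simpa using h3
  set d₁ := min δ₁ (a/2) with hd₁def
  set d₂ := min δ₂ (b/2) with hd₂def
  have hd₁0 : 0 < d₁ := lt_min hδ₁0 (by linarith)
  have hd₂0 : 0 < d₂ := lt_min hδ₂0 (by linarith)
  have hd₁a2 : d₁ ≤ a/2 := min_le_right _ _
  have hd₂b2 : d₂ ≤ b/2 := min_le_right _ _
  have hd₁a : d₁ < a := by linarith
  have hd₂b : d₂ < b := by linarith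
  have hab0 : (0:ℝ) ≤ a + b := by linarith
  have hd2le : d₂ ≤ a + b - d₁ := by linarith
  have hLip₁ : ∀ s ∈ Set.Icc (0:ℝ) d₁, ‖f₁ s - f₁ 0‖ ≤ M₁ * s := fun s hs =>
    hLipgen f₁ δ₁ M₁ hδ₁0 hdiff₁ hM₁ s ⟨hs.1, le_trans hs.2 (min_le_left _ _)⟩
  have hLip₂ : ∀ s ∈ Set.Icc (0:ℝ) d₂, ‖f₂ s - f₂ 0‖ ≤ M₂ * s := fun s hs =>
    hLipgen f₂ δ₂ M₂ hδ₂0 hdiff₂ hM₂ s ⟨hs.1, le_trans hs.2 (min_le_left _ _)⟩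
  -- integrability of the substituted integrand
  have hφsub : IntervalIntegrable (fun s : ℝ => φ (b - s)) volume 0 (a+b) := by
    have h1 := hint.comp_sub_left b
    rw [sub_neg_eq_add, sub_self] at h1
    rw [add_comm]
    exact h1.symm
  have hΨint : ∀ n : ℕ, IntervalIntegrable
      (fun s : ℝ => φ (b - s) * ((b - s : ℝ):ℂ)^n) volume 0 (a+b) := by
    intro n
    exact hφsub.mul_continuousOn (((Complex.continuous_ofReal.comp
      (continuous_const.sub continuous_id)).pow n).continuousOn)
  have hmem : ∀ x : ℝ, 0 ≤ x → x ≤ a+b → x ∈ Set.uIcc (0:ℝ) (a+b) := by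
    intro x h1 h2
    rw [Set.uIcc_of_le hab0]
    exact ⟨h1, h2⟩
  have hII : ∀ (n : ℕ) (x y : ℝ), 0 ≤ x → x ≤ a+b → 0 ≤ y → y ≤ a+b →
      IntervalIntegrable (fun s : ℝ => φ (b - s) * ((b - s : ℝ):ℂ)^n) volume x y :=
    fun n x y hx1 hx2 hy1 hy2 => (hΨint n).mono_set
      (Set.uIcc_subset_uIcc (hmem x hx1 hx2) (hmem y hy1 hy2))
  -- step 1 : reflect the integral
  have hstep1 : ∀ n : ℕ, (∫ t in (-a)..b, φ t * (t:ℂ)^n)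
      = ∫ s in (0:ℝ)..(a+b), φ (b - s) * ((b - s:ℝ):ℂ)^n := by
    intro n
    have h := intervalIntegral.integral_comp_sub_left (a := 0) (b := a+b)
      (fun t : ℝ => φ t * ((t:ℝ):ℂ)^n) b
    rw [show b - (a+b) = -a by ring, sub_zero] at h
    exact h.symm
  -- step 2 : split into three pieces
  have hsplit : ∀ n : ℕ, (∫ s in (0:ℝ)..(a+b), φ (b-s) * ((b-s:ℝ):ℂ)^n)
      = (∫ s in (0:ℝ)..d₂, φ (b-s) * ((b-s:ℝ):ℂ)^n)
        + (∫ s in d₂..(a+b-d₁), φ (b-s) * ((b-s:ℝ):ℂ)^n)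
        + ∫ s in (a+b-d₁)..(a+b), φ (b-s) * ((b-s:ℝ):ℂ)^n := by
    intro n
    rw [intervalIntegral.integral_add_adjacent_intervals
        (hII n 0 d₂ le_rfl hab0 hd₂0.le (by linarith))
        (hII n d₂ (a+b-d₁) hd₂0.le (by linarith) (by linarith) (by linarith)),
      intervalIntegral.integral_add_adjacent_intervals
        (hII n 0 (a+b-d₁) le_rfl hab0 (by linarith) (by linarith))
        (hII n (a+b-d₁) (a+b) (by linarith) (by linarith) hab0 le_rfl)]
  -- piece 1
  have hp1 : ∀ n : ℕ, (∫ s in (0:ℝ)..d₂, φ (b-s) * ((b-s:ℝ):ℂ)^n)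
      = ∫ s in Ioc (0:ℝ) d₂, (s:ℂ)^ν * f₂ s * ((b-s:ℝ):ℂ)^n := by
    intro n
    rw [intervalIntegral.integral_of_le hd₂0.le]
    refine setIntegral_congr_fun measurableSet_Ioc (fun s hs => ?_)
    have h1 : b - s ∈ Set.Icc (-a) b := ⟨by linarith [hs.2], by linarith [hs.1]⟩
    have h2 := hφ₂ (b - s) h1
    rw [sub_sub_cancel] at h2
    rw [h2]
  -- piece 3
  have hp3 : ∀ n : ℕ, (∫ s in (a+b-d₁)..(a+b), φ (b-s) * ((b-s:ℝ):ℂ)^n)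
      = (-1:ℂ)^n * ∫ r in Ioc (0:ℝ) d₁, (r:ℂ)^μ * f₁ r * ((a-r:ℝ):ℂ)^n := by
    intro n
    have h := intervalIntegral.integral_comp_sub_left (a := 0) (b := d₁)
      (fun s : ℝ => φ (b - s) * ((b - s:ℝ):ℂ)^n) (a+b)
    rw [sub_zero] at h
    rw [← h, intervalIntegral.integral_of_le hd₁0.le, ← MeasureTheory.integral_const_mul]
    refine setIntegral_congr_fun measurableSet_Ioc (fun r hr => ?_)
    have e0 : b - (a + b - r) = r - a := by ring
    simp only [e0]
    have h2 := hφ₁ (r - a) ⟨by linarith [hr.1], by linarith [hr.2]⟩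
    rw [show r - a + a = r by ring] at h2
    rw [h2]
    have e2 : ((r - a:ℝ):ℂ) = -((a - r:ℝ):ℂ) := by push_cast; ring
    rw [e2, neg_pow]
    ring
  -- core applications
  have hint₂ : ∀ n : ℕ, IntegrableOn (fun s : ℝ => (s:ℂ)^ν * f₂ s * ((b-s:ℝ):ℂ)^n)
      (Ioc 0 d₂) volume := by
    intro n
    have h1 : IntegrableOn (fun s : ℝ => φ (b-s) * ((b-s:ℝ):ℂ)^n) (Ioc 0 d₂) volume :=
      (intervalIntegrable_iff_integrableOn_Ioc_of_le hd₂0.le).mp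
        (hII n 0 d₂ le_rfl hab0 hd₂0.le (by linarith))
    refine IntegrableOn.congr_fun h1 (fun s hs => ?_) measurableSet_Ioc
    have h2 := hφ₂ (b - s) ⟨by linarith [hs.2], by linarith [hs.1]⟩
    rw [sub_sub_cancel] at h2
    rw [h2]
  have hcore₂ := core_scaled ν hν f₂ b d₂ M₂ hb hd₂0 hd₂b hLip₂ hint₂
  have hint₁ : ∀ n : ℕ, IntegrableOn (fun r : ℝ => (r:ℂ)^μ * f₁ r * ((a-r:ℝ):ℂ)^n)
      (Ioc 0 d₁) volume := by
    intro n
    have h1 := (hII n (a+b-d₁) (a+b) (by linarith) (by linarith) hab0 le_rfl).comp_sub_left (a+b)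
    rw [show a+b-(a+b-d₁) = d₁ by ring, sub_self] at h1
    have h2 := (intervalIntegrable_iff_integrableOn_Ioc_of_le hd₁0.le).mp h1.symm
    have h3 : IntegrableOn (fun r : ℝ =>
        ((-1:ℂ))^n * (φ (b - (a+b-r)) * ((b-(a+b-r):ℝ):ℂ)^n)) (Ioc 0 d₁) volume :=
      h2.const_mul _
    refine IntegrableOn.congr_fun h3 (fun r hr => ?_) measurableSet_Ioc
    have e0 : b - (a + b - r) = r - a := by ring
    simp only [e0]
    have h4 := hφ₁ (r - a) ⟨by linarith [hr.1], by linarith [hr.2]⟩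
    rw [show r - a + a = r by ring] at h4
    rw [h4]
    have e2 : ((r - a:ℝ):ℂ) = -((a - r:ℝ):ℂ) := by push_cast; ring
    rw [e2, neg_pow]
    ring_nf
    have hneg : ((-1:ℂ))^(n*2) = 1 := by
      rw [mul_comm, pow_mul]
      norm_num
    rw [hneg, mul_one]
  have hcore₁ := core_scaled μ hμ f₁ a d₁ M₁ ha hd₁0 hd₁a hLip₁ hint₁
  -- target comparison function
  set R' : ℕ → ℝ := fun n : ℕ => (n:ℝ)^(-μ.re-2) * a^n + (n:ℝ)^(-ν.re-2) * b^n with hR'def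
  have hR'₁ : (fun n : ℕ => (n:ℝ)^(-μ.re-2) * a^n) =O[atTop] R' := by
    apply Asymptotics.isBigO_of_le
    intro n
    have h1 : (0:ℝ) ≤ (n:ℝ)^(-μ.re-2) * a^n := by positivity
    have h2 : (0:ℝ) ≤ (n:ℝ)^(-ν.re-2) * b^n := by positivity
    rw [Real.norm_eq_abs, Real.norm_eq_abs, _root_.abs_of_nonneg h1, _root_.abs_of_nonneg (by positivity)]
    simp only [hR'def]
    linarith
  have hR'₂ : (fun n : ℕ => (n:ℝ)^(-ν.re-2) * b^n) =O[atTop] R' := by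
    apply Asymptotics.isBigO_of_le
    intro n
    have h1 : (0:ℝ) ≤ (n:ℝ)^(-μ.re-2) * a^n := by positivity
    have h2 : (0:ℝ) ≤ (n:ℝ)^(-ν.re-2) * b^n := by positivity
    rw [Real.norm_eq_abs, Real.norm_eq_abs, _root_.abs_of_nonneg h2, _root_.abs_of_nonneg (by positivity)]
    simp only [hR'def]
    linarith
  -- middle piece
  set r0 := max (a - d₁) (b - d₂) with hr0def
  have hr00 : (0:ℝ) ≤ r0 := le_trans (by linarith : (0:ℝ) ≤ a - d₁) (le_max_left _ _)
  set A0 := ∫ s in Ioc d₂ (a+b-d₁), ‖φ (b - s)‖ with hA0def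
  have hA00 : 0 ≤ A0 := integral_nonneg (fun s => norm_nonneg _)
  have hφn : IntegrableOn (fun s : ℝ => ‖φ (b-s)‖) (Ioc d₂ (a+b-d₁)) volume := by
    have h1 := (hφsub.mono_set
      (Set.uIcc_subset_uIcc (hmem d₂ hd₂0.le (by linarith))
        (hmem (a+b-d₁) (by linarith) (by linarith)))).norm
    exact (intervalIntegrable_iff_integrableOn_Ioc_of_le hd2le).mp h1
  have hmid : ∀ n : ℕ, ‖∫ s in d₂..(a+b-d₁), φ (b-s) * ((b-s:ℝ):ℂ)^n‖ ≤ A0 * r0^n := by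
    intro n
    rw [intervalIntegral.integral_of_le hd2le]
    have hgint : IntegrableOn (fun s : ℝ => ‖φ (b-s)‖ * r0^n) (Ioc d₂ (a+b-d₁)) volume :=
      hφn.mul_const _
    have h1 : ‖∫ s in Ioc d₂ (a+b-d₁), φ (b-s) * ((b-s:ℝ):ℂ)^n‖
        ≤ ∫ s in Ioc d₂ (a+b-d₁), ‖φ (b-s)‖ * r0^n := by
      refine norm_integral_le_of_norm_le hgint ?_
      filter_upwards [ae_restrict_mem measurableSet_Ioc] with s hs
      rw [norm_mul, norm_pow, Complex.norm_real, Real.norm_eq_abs]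
      have habs : |b - s| ≤ r0 := by
        rw [abs_le]
        constructor
        · have := le_max_left (a-d₁) (b-d₂)
          simp only [hr0def] at *
          linarith [hs.2]
        · have := le_max_right (a-d₁) (b-d₂)
          simp only [hr0def] at *
          linarith [hs.1]
      exact mul_le_mul_of_nonneg_left (pow_le_pow_left₀ (abs_nonneg _) habs n) (norm_nonneg _)
    refine h1.trans (le_of_eq ?_)
    rw [MeasureTheory.integral_mul_const]
  have hmid' : (fun n : ℕ => ∫ s in d₂..(a+b-d₁), φ (b-s) * ((b-s:ℝ):ℂ)^n)
      =O[atTop] (fun n : ℕ => A0 * r0^n) := by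
    rw [isBigO_iff]
    refine ⟨1, ?_⟩
    filter_upwards with n
    rw [one_mul, Real.norm_eq_abs, _root_.abs_of_nonneg (mul_nonneg hA00 (pow_nonneg hr00 n))]
    exact hmid n
  have hmidO : (fun n : ℕ => ∫ s in d₂..(a+b-d₁), φ (b-s) * ((b-s:ℝ):ℂ)^n) =O[atTop] R' := by
    rcases le_total a b with hab | hab
    · have hr0m : r0 < b := by
        apply max_lt (by linarith) (by linarith)
      exact hmid'.trans ((aux_geo A0 r0 b (-ν.re-2) hr00 hr0m).trans hR'₂)
    · have hr0m : r0 < a := by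
        apply max_lt (by linarith) (by linarith)
      exact hmid'.trans ((aux_geo A0 r0 a (-μ.re-2) hr00 hr0m).trans hR'₁)
  -- assemble
  have hG : (fun n : ℕ => (∫ t in (-a)..b, φ t * (t:ℂ)^n)
      - ((-1)^n * f₁ 0 * Complex.Gamma (μ+1) * (n:ℂ)^(-μ-1) * (a:ℂ)^((n:ℂ)+μ+1)
        + f₂ 0 * Complex.Gamma (ν+1) * (n:ℂ)^(-ν-1) * (b:ℂ)^((n:ℂ)+ν+1)))
      = fun n : ℕ =>
        ((-1:ℂ)^n * ((∫ r in Ioc (0:ℝ) d₁, (r:ℂ)^μ * f₁ r * ((a-r:ℝ):ℂ)^n)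
            - f₁ 0 * Complex.Gamma (μ+1) * (n:ℂ)^(-μ-1) * (a:ℂ)^((n:ℂ)+μ+1)))
        + ((∫ s in Ioc (0:ℝ) d₂, (s:ℂ)^ν * f₂ s * ((b-s:ℝ):ℂ)^n)
            - f₂ 0 * Complex.Gamma (ν+1) * (n:ℂ)^(-ν-1) * (b:ℂ)^((n:ℂ)+ν+1))
        + (∫ s in d₂..(a+b-d₁), φ (b-s) * ((b-s:ℝ):ℂ)^n) := by
    funext n
    rw [hstep1 n, hsplit n, hp1 n, hp3 n]
    ring
  have hfinal : (fun n : ℕ =>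
        ((-1:ℂ)^n * ((∫ r in Ioc (0:ℝ) d₁, (r:ℂ)^μ * f₁ r * ((a-r:ℝ):ℂ)^n)
            - f₁ 0 * Complex.Gamma (μ+1) * (n:ℂ)^(-μ-1) * (a:ℂ)^((n:ℂ)+μ+1)))
        + ((∫ s in Ioc (0:ℝ) d₂, (s:ℂ)^ν * f₂ s * ((b-s:ℝ):ℂ)^n)
            - f₂ 0 * Complex.Gamma (ν+1) * (n:ℂ)^(-ν-1) * (b:ℂ)^((n:ℂ)+ν+1))
        + (∫ s in d₂..(a+b-d₁), φ (b-s) * ((b-s:ℝ):ℂ)^n)) =O[atTop] R' := by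
    exact ((aux_neg_one_pow (hcore₁.trans hR'₁)).add (hcore₂.trans hR'₂)).add hmidO
  have hRR : R' =ᶠ[atTop]
      (fun n : ℕ => ‖((n:ℂ)^(-μ-2))‖ * a^n + ‖((n:ℂ)^(-ν-2))‖ * b^n) := by
    filter_upwards [eventually_ge_atTop 1] with n hn
    have hn0 : (0:ℝ) < (n:ℝ) := by
      have : (1:ℝ) ≤ (n:ℝ) := by exact_mod_cast hn
      linarith
    have e1 : ‖((n:ℂ)^(-μ-2))‖ = (n:ℝ)^(-μ.re-2) := by
      rw [show ((n:ℕ):ℂ) = (((n:ℝ)):ℂ) by push_cast; rfl,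
        Complex.norm_cpow_eq_rpow_re_of_pos hn0]
      congr 1
    have e2 : ‖((n:ℂ)^(-ν-2))‖ = (n:ℝ)^(-ν.re-2) := by
      rw [show ((n:ℕ):ℂ) = (((n:ℝ)):ℂ) by push_cast; rfl,
        Complex.norm_cpow_eq_rpow_re_of_pos hn0]
      congr 1
    simp only [hR'def, e1, e2]
  rw [hG]
  exact hfinal.trans_eventuallyEq hRR
end

section
/- Let c = max{a, b} with a, b > 0 and φ as in the Section 2 assumptions, with the additional assumption that in case a = b and Re μ = Re ν, n ranges over indices for which (-1)^n f₁(0)Γ(μ+1) + f₂(0)Γ(ν+1) a^{ν-μ} n^{μ-ν} is bounded away from 0. Then |∫_{-a}^{b} φ(t) t^n dt|^{1/n} → c as n → ∞. -/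
open MeasureTheory intervalIntegral Complex Filter Topology

lemma watson {w : ℂ} (hw : -1 < w.re) {c η : ℝ} (hη : 0 < η) (hηc : η < c)
    {f : ℝ → ℂ} (hf : ∀ t ∈ Set.Icc (0:ℝ) η, ContinuousAt f t) :
    Tendsto (fun n : ℕ => (((n : ℝ) / c : ℝ) : ℂ) ^ (w + 1) *
        (∫ s in (0:ℝ)..η, (s:ℂ) ^ w * f s * (((c - s : ℝ)) : ℂ) ^ n) / (c:ℂ) ^ n)
      atTop (𝓝 (f 0 * Complex.Gamma (w + 1))) := by
  have hc : 0 < c := hη.trans hηc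
  obtain ⟨M, hM⟩ : ∃ M : ℝ, ∀ t ∈ Set.Icc (0:ℝ) η, ‖f t‖ ≤ M :=
    isCompact_Icc.exists_bound_of_continuousOn (fun t ht => (hf t ht).continuousWithinAt)
  have hM0 : 0 ≤ M := le_trans (norm_nonneg _) (hM 0 ⟨le_refl _, hη.le⟩)
  set g : ℝ → ℝ := fun u => M * (Real.exp (-u) * u ^ w.re) with hg
  have hgint : IntegrableOn g (Set.Ioi (0:ℝ)) := by
    have := Real.GammaIntegral_convergent (show (0:ℝ) < w.re + 1 by linarith)
    simp only [add_sub_cancel_right] at this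
    exact this.const_mul M
  set F : ℕ → ℝ → ℂ := fun n u => Set.indicator (Set.Ioc 0 ((n:ℝ) * η / c))
      (fun u => (u:ℂ) ^ w * f (c * u / n) * (((1 - u / n : ℝ)) : ℂ) ^ n) u with hF
  -- measurability
  have measF : ∀ n, AEStronglyMeasurable (F n) (volume.restrict (Set.Ioi 0)) := by
    intro n
    rcases Nat.eq_zero_or_pos n with h0 | hn
    · simp only [hF, h0]
      norm_num
      exact aestronglyMeasurable_const
    · simp only [hF]
      apply (aestronglyMeasurable_indicator_iff measurableSet_Ioc).mpr
      rw [Measure.restrict_restrict measurableSet_Ioc,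
        Set.inter_eq_self_of_subset_left Set.Ioc_subset_Ioi_self]
      apply ContinuousOn.aestronglyMeasurable _ measurableSet_Ioc
      intro u hu
      apply ContinuousAt.continuousWithinAt
      have h1 : ContinuousAt (fun u : ℝ => (u:ℂ) ^ w) u :=
        (continuousAt_cpow_const (ofReal_mem_slitPlane.2 hu.1)).comp
          continuous_ofReal.continuousAt
      have harg : c * u / n ∈ Set.Icc (0:ℝ) η := by
        constructor
        · exact div_nonneg (mul_nonneg hc.le hu.1.le) (Nat.cast_nonneg n)
        · rw [div_le_iff₀ (by exact_mod_cast hn)]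
          have := hu.2
          rw [le_div_iff₀ hc] at this
          nlinarith
      have h2 : ContinuousAt (fun u : ℝ => f (c * u / n)) u :=
        ContinuousAt.comp (f := fun u : ℝ => c * u / (n:ℝ)) (hf _ harg)
          (((continuous_const.mul continuous_id).div_const (n:ℝ)).continuousAt)
      have h3 : ContinuousAt (fun u : ℝ => (((1 - u / n : ℝ)) : ℂ) ^ n) u :=
        ((Complex.continuous_ofReal.comp
          (continuous_const.sub (continuous_id.div_const _))).pow n).continuousAt
      exact (h1.mul h2).mul h3
  -- bound
  have hbound : ∀ n, ∀ᵐ u ∂(volume.restrict (Set.Ioi 0)), ‖F n u‖ ≤ g u := by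
    intro n
    filter_upwards [ae_restrict_mem measurableSet_Ioi] with u hu
    have hu0 : (0:ℝ) < u := hu
    by_cases hmem : u ∈ Set.Ioc 0 ((n:ℝ) * η / c)
    · have hn : 0 < n := by
        by_contra h
        push_neg at h
        interval_cases n
        have h1 := hmem.2
        norm_num at h1
        linarith
      have hn0 : (0:ℝ) < (n:ℝ) := by exact_mod_cast hn
      have hucn : c * u ≤ (n:ℝ) * η := by
        have := hmem.2
        rw [le_div_iff₀ hc] at this
        nlinarith
      have hun1 : u / n < 1 := by
        rw [div_lt_one hn0]
        nlinarith
      simp only [hF, Set.indicator_of_mem hmem]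
      have e1 : ‖(u:ℂ) ^ w‖ = u ^ w.re := by
        rw [Complex.norm_cpow_eq_rpow_re_of_pos hu0]
      have e2 : ‖f (c * u / n)‖ ≤ M := by
        apply hM
        refine ⟨by positivity, ?_⟩
        rw [div_le_iff₀ hn0]
        nlinarith
      have e3 : ‖(((1 - u / n : ℝ)) : ℂ) ^ n‖ ≤ Real.exp (-u) := by
        rw [norm_pow, Complex.norm_real, Real.norm_eq_abs, _root_.abs_of_nonneg (by linarith)]
        have h1 : (1 - u / n : ℝ) ≤ Real.exp (-(u/n)) := by
          have := Real.add_one_le_exp (-(u/n)); linarith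
        calc (1 - u / n : ℝ) ^ n ≤ Real.exp (-(u/n)) ^ n :=
              pow_le_pow_left₀ (by linarith) h1 n
          _ = Real.exp (-u) := by
              rw [← Real.exp_nat_mul]
              congr 1
              field_simp
      calc ‖(u:ℂ) ^ w * f (c * u / n) * (((1 - u / n : ℝ)) : ℂ) ^ n‖
          = ‖(u:ℂ) ^ w‖ * ‖f (c * u / n)‖ * ‖(((1 - u / n : ℝ)) : ℂ) ^ n‖ := by
            rw [norm_mul, norm_mul]
        _ ≤ u ^ w.re * M * Real.exp (-u) := by
            rw [e1]
            apply mul_le_mul _ e3 (norm_nonneg _) (by positivity)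
            exact mul_le_mul_of_nonneg_left e2 (Real.rpow_nonneg hu0.le _)
        _ = g u := by rw [hg]; ring
    · simp only [hF, Set.indicator_of_notMem hmem, norm_zero, hg]
      positivity
  -- pointwise limit
  have hlim : ∀ᵐ u ∂(volume.restrict (Set.Ioi 0)),
      Tendsto (fun n => F n u) atTop
        (𝓝 ((u:ℂ) ^ w * f 0 * ((Real.exp (-u) : ℝ) : ℂ))) := by
    filter_upwards [ae_restrict_mem measurableSet_Ioi] with u hu
    have hu0 : (0:ℝ) < u := hu
    have hend : ∀ᶠ n : ℕ in atTop,
        (u:ℂ) ^ w * f (c * u / n) * (((1 - u / n : ℝ)) : ℂ) ^ n = F n u := by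
      filter_upwards [eventually_ge_atTop (Nat.ceil (c * u / η))] with n hn
      have : u ≤ (n:ℝ) * η / c := by
        rw [le_div_iff₀ hc]
        have h1 : c * u / η ≤ (n:ℝ) := le_trans (Nat.le_ceil _) (by exact_mod_cast hn)
        rw [div_le_iff₀ hη] at h1
        nlinarith
      simp only [hF, Set.indicator_of_mem (Set.mem_Ioc.mpr ⟨hu0, this⟩)]
    have t1 : Tendsto (fun n : ℕ => f (c * u / n)) atTop (𝓝 (f 0)) :=
      (hf 0 ⟨le_refl _, hη.le⟩).tendsto.comp (tendsto_const_div_atTop_nhds_zero_nat (c * u))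
    have t2 : Tendsto (fun n : ℕ => (((1 - u / n : ℝ)) : ℂ) ^ n) atTop
        (𝓝 ((Real.exp (-u) : ℝ) : ℂ)) := by
      have h2 := (Complex.continuous_ofReal.tendsto _).comp (Real.tendsto_one_add_div_pow_exp (-u))
      simp only [Function.comp_def] at h2
      exact Filter.Tendsto.congr (fun n => by push_cast; ring) h2
    exact Tendsto.congr' hend ((tendsto_const_nhds.mul t1).mul t2)
  have key := tendsto_integral_of_dominated_convergence g measF hgint hbound hlim
  -- evaluate limit integral
  have hlimint : (∫ u in Set.Ioi (0:ℝ), (u:ℂ) ^ w * f 0 * ((Real.exp (-u) : ℝ) : ℂ))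
      = f 0 * Complex.Gamma (w + 1) := by
    rw [Complex.Gamma_eq_integral (show 0 < (w+1).re by simp; linarith)]
    unfold Complex.GammaIntegral
    rw [← MeasureTheory.integral_const_mul]
    apply MeasureTheory.setIntegral_congr_fun measurableSet_Ioi
    intro u hu
    simp only [add_sub_cancel_right]
    ring
  rw [hlimint] at key
  -- substitution identity
  have hsub : ∀ n : ℕ, 1 ≤ n →
      ((((n:ℝ)/c : ℝ)):ℂ)^(w+1) * (∫ s in (0:ℝ)..η, (s:ℂ)^w * f s * (((c-s:ℝ)):ℂ)^n) / (c:ℂ)^n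
        = ∫ u in Set.Ioi (0:ℝ), F n u := by
    intro n hn
    have hn0 : (0:ℝ) < (n:ℝ) := by exact_mod_cast hn
    have hT0 : (0:ℝ) ≤ (n:ℝ) * η / c := by positivity
    have hrhs : (∫ u in Set.Ioi (0:ℝ), F n u)
        = ∫ u in (0:ℝ)..((n:ℝ)*η/c), (u:ℂ)^w * f (c*u/(n:ℝ)) * (((1 - u/(n:ℝ) : ℝ)):ℂ)^n := by
      simp only [hF]
      rw [MeasureTheory.integral_indicator measurableSet_Ioc,
        Measure.restrict_restrict measurableSet_Ioc,
        Set.inter_eq_self_of_subset_left Set.Ioc_subset_Ioi_self,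
        intervalIntegral.integral_of_le hT0]
    have heq : Set.EqOn
        (fun x : ℝ => ((((c/(n:ℝ)) * x : ℝ)):ℂ)^w * f ((c/(n:ℝ)) * x) * (((c - (c/(n:ℝ)) * x : ℝ)):ℂ)^n)
        (fun x : ℝ => (((c/(n:ℝ) : ℝ)):ℂ)^w * (c:ℂ)^n * ((x:ℂ)^w * f (c*x/(n:ℝ)) * (((1 - x/(n:ℝ) : ℝ)):ℂ)^n))
        (Set.uIcc (0:ℝ) ((n:ℝ)*η/c)) := by
      intro x hx
      rw [Set.uIcc_of_le hT0] at hx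
      have hx0 : 0 ≤ x := hx.1
      have h1 : ((((c/(n:ℝ)) * x : ℝ)):ℂ)^w = (((c/(n:ℝ):ℝ)):ℂ)^w * (x:ℂ)^w := by
        rw [Complex.ofReal_mul]
        exact Complex.mul_cpow_ofReal_nonneg (div_nonneg hc.le (Nat.cast_nonneg n)) hx0 w
      have h2 : (c/(n:ℝ)) * x = c * x / (n:ℝ) := by ring
      have h3 : (((c - (c/(n:ℝ)) * x : ℝ)):ℂ)^n = (c:ℂ)^n * (((1 - x/(n:ℝ) : ℝ)):ℂ)^n := by
        rw [← mul_pow]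
        congr 1
        push_cast
        field_simp
      simp only []
      rw [h1, h3, h2]
      ring
    have e2 := intervalIntegral.smul_integral_comp_mul_left (a := 0) (b := (n:ℝ)*η/c)
      (fun s => (s:ℂ)^w * f s * (((c-s:ℝ)):ℂ)^n) (c/(n:ℝ))
    rw [mul_zero, show (c/(n:ℝ)) * ((n:ℝ)*η/c) = η from by field_simp] at e2
    rw [intervalIntegral.integral_congr heq, intervalIntegral.integral_const_mul] at e2
    rw [hrhs, ← e2]
    set J := ∫ u in (0:ℝ)..((n:ℝ)*η/c), (u:ℂ)^w * f (c*u/(n:ℝ)) * (((1 - u/(n:ℝ) : ℝ)):ℂ)^n with hJ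
    rw [real_smul]
    have hcpow : (c:ℂ)^n ≠ 0 := pow_ne_zero _ (by exact_mod_cast hc.ne')
    have hb0 : (0:ℝ) < c/(n:ℝ) := by positivity
    have hb0' : ((c/(n:ℝ) : ℝ):ℂ) ≠ 0 := by exact_mod_cast hb0.ne'
    have hkey : ((((n:ℝ)/c : ℝ)):ℂ)^(w+1) * ((((c/(n:ℝ):ℝ)):ℂ) * (((c/(n:ℝ):ℝ)):ℂ)^w) = 1 := by
      have h4 : (((c/(n:ℝ):ℝ)):ℂ) * (((c/(n:ℝ):ℝ)):ℂ)^w = (((c/(n:ℝ):ℝ)):ℂ)^(w+1) := by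
        rw [Complex.cpow_add _ _ hb0', Complex.cpow_one]; ring
      rw [h4, ← Complex.mul_cpow_ofReal_nonneg (div_nonneg (Nat.cast_nonneg n) hc.le) hb0.le,
        ← Complex.ofReal_mul, show ((n:ℝ)/c) * (c/(n:ℝ)) = 1 from by field_simp]
      simp
    have : ((((n:ℝ)/c : ℝ)):ℂ)^(w+1) * ((((c/(n:ℝ):ℝ)):ℂ) * ((((c/(n:ℝ):ℝ)):ℂ)^w * (c:ℂ)^n * J)) / (c:ℂ)^n
        = (((((n:ℝ)/c : ℝ)):ℂ)^(w+1) * ((((c/(n:ℝ):ℝ)):ℂ) * (((c/(n:ℝ):ℝ)):ℂ)^w)) * J * ((c:ℂ)^n / (c:ℂ)^n) := by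
      ring
    rw [this, hkey, div_self hcpow, one_mul, mul_one]
  refine Tendsto.congr' ?_ key
  filter_upwards [eventually_ge_atTop 1] with n hn
  exact (hsub n hn).symm

lemma root_squeeze {c : ℝ} (hc : 0 < c) {K κ C : ℝ} (hκ : 0 < κ) (hC : 0 < C)
    {x : ℕ → ℝ} {N : ℕ → ℕ} (hN : StrictMono N)
    (hlow : ∀ᶠ k in atTop, κ * c ^ (N k) * ((N k : ℝ)) ^ (-K) ≤ x k)
    (hup : ∀ᶠ k in atTop, x k ≤ C * c ^ (N k)) :
    Tendsto (fun k => x k ^ ((N k : ℝ)⁻¹)) atTop (𝓝 c) := by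
  have hNtop : Tendsto N atTop atTop := hN.tendsto_atTop
  have hNat : Tendsto (fun k => (N k : ℝ)) atTop atTop :=
    tendsto_natCast_atTop_atTop.comp hNtop
  have hinv : Tendsto (fun k => ((N k : ℝ))⁻¹) atTop (𝓝 0) := hNat.inv_tendsto_atTop
  have hlogm : Tendsto (fun k => Real.log (N k) / (N k : ℝ)) atTop (𝓝 0) :=
    (Real.isLittleO_log_id_atTop.tendsto_div_nhds_zero).comp hNat
  have hev1 : ∀ᶠ k in atTop, 1 ≤ N k := hNtop.eventually_ge_atTop 1
  -- positivity of x eventually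
  have hxpos : ∀ᶠ k in atTop, 0 < x k := by
    filter_upwards [hlow, hev1] with k hk h1
    have hm0 : (0:ℝ) < (N k : ℝ) := by exact_mod_cast h1
    have : 0 < κ * c ^ (N k) * ((N k : ℝ)) ^ (-K) := by positivity
    linarith
  -- log lower bound
  have hlb : ∀ᶠ k in atTop,
      Real.log κ * ((N k:ℝ))⁻¹ + Real.log c - K * (Real.log (N k) / (N k:ℝ))
        ≤ Real.log (x k) * ((N k:ℝ))⁻¹ := by
    filter_upwards [hlow, hev1, hxpos] with k hk h1 hx
    have hm0 : (0:ℝ) < (N k : ℝ) := by exact_mod_cast h1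
    have hlog1 : Real.log (κ * c ^ (N k) * ((N k : ℝ)) ^ (-K))
        = Real.log κ + (N k:ℝ) * Real.log c + (-K) * Real.log (N k) := by
      rw [Real.log_mul (by positivity) (by positivity), Real.log_mul hκ.ne' (by positivity),
        Real.log_pow, Real.log_rpow hm0]
    have h2 : Real.log κ + (N k:ℝ) * Real.log c + (-K) * Real.log (N k) ≤ Real.log (x k) := by
      rw [← hlog1]
      exact Real.log_le_log (by positivity) hk
    have h3 := mul_le_mul_of_nonneg_right h2 (inv_nonneg.mpr hm0.le)
    calc Real.log κ * ((N k:ℝ))⁻¹ + Real.log c - K * (Real.log (N k) / (N k:ℝ))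
        = (Real.log κ + (N k:ℝ) * Real.log c + (-K) * Real.log (N k)) * ((N k:ℝ))⁻¹ := by
          field_simp
          ring
      _ ≤ Real.log (x k) * ((N k:ℝ))⁻¹ := h3
  -- log upper bound
  have hub : ∀ᶠ k in atTop,
      Real.log (x k) * ((N k:ℝ))⁻¹ ≤ Real.log C * ((N k:ℝ))⁻¹ + Real.log c := by
    filter_upwards [hup, hev1, hxpos] with k hk h1 hx
    have hm0 : (0:ℝ) < (N k : ℝ) := by exact_mod_cast h1
    have h2 : Real.log (x k) ≤ Real.log C + (N k:ℝ) * Real.log c := by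
      calc Real.log (x k) ≤ Real.log (C * c ^ (N k)) := Real.log_le_log hx hk
        _ = Real.log C + (N k:ℝ) * Real.log c := by
            rw [Real.log_mul hC.ne' (by positivity), Real.log_pow]
    have h3 := mul_le_mul_of_nonneg_right h2 (inv_nonneg.mpr hm0.le)
    calc Real.log (x k) * ((N k:ℝ))⁻¹ ≤ (Real.log C + (N k:ℝ) * Real.log c) * ((N k:ℝ))⁻¹ := h3
      _ = Real.log C * ((N k:ℝ))⁻¹ + Real.log c := by field_simp
  have tlo : Tendsto (fun k => Real.log κ * ((N k:ℝ))⁻¹ + Real.log c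
      - K * (Real.log (N k) / (N k:ℝ))) atTop (𝓝 (Real.log c)) := by
    have := ((hinv.const_mul (Real.log κ)).add_const (Real.log c)).sub (hlogm.const_mul K)
    simpa using this
  have tup : Tendsto (fun k => Real.log C * ((N k:ℝ))⁻¹ + Real.log c) atTop (𝓝 (Real.log c)) := by
    have := (hinv.const_mul (Real.log C)).add_const (Real.log c)
    simpa using this
  have tmid : Tendsto (fun k => Real.log (x k) * ((N k:ℝ))⁻¹) atTop (𝓝 (Real.log c)) :=
    tendsto_of_tendsto_of_tendsto_of_le_of_le' tlo tup hlb hub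
  have texp := (Real.continuous_exp.tendsto _).comp tmid
  rw [Real.exp_log hc] at texp
  refine Tendsto.congr' ?_ texp
  filter_upwards [hxpos] with k hk
  simp only [Function.comp]
  rw [Real.rpow_def_of_pos hk]

lemma W_eq' {z cA W : ℂ} (hz : z ≠ 0) (hcA : cA ≠ 0) (w : ℂ) :
    W = cA * (z^(w+1))⁻¹ * (z^(w+1) * W / cA) := by
  have h2 : z^(w+1) ≠ 0 := by rw [Ne, Complex.cpow_eq_zero_iff]; tauto
  field_simp

lemma W_eq {w : ℂ} {cc : ℝ} (hcc : 0 < cc) {n : ℕ} (hn : 1 ≤ n) (W : ℂ) :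
    W = (cc:ℂ)^n * (((((n:ℝ)/cc : ℝ)):ℂ)^(w+1))⁻¹ *
      (((((n:ℝ)/cc : ℝ)):ℂ)^(w+1) * W / (cc:ℂ)^n) := by
  have hn0 : (0:ℝ) < (n:ℝ) := by exact_mod_cast hn
  have h1 : ((((n:ℝ)/cc : ℝ)):ℂ) ≠ 0 := by
    rw [Complex.ofReal_ne_zero]
    positivity
  have h2 : ((((n:ℝ)/cc:ℝ)):ℂ)^(w+1) ≠ 0 := by
    rw [Ne, Complex.cpow_eq_zero_iff]
    tauto
  have h3 : ((cc:ℝ):ℂ)^n ≠ 0 := pow_ne_zero _ (Complex.ofReal_ne_zero.mpr hcc.ne')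
  exact W_eq' h1 h3 w

lemma norm_scale {w : ℂ} {cc : ℝ} (hcc : 0 < cc) {n : ℕ} (hn : 1 ≤ n) (G : ℂ) :
    ‖(cc:ℂ)^n * (((((n:ℝ)/cc : ℝ)):ℂ)^(w+1))⁻¹ * G‖
      = cc^(w.re+1) * (cc^n * (n:ℝ)^(-(w.re+1))) * ‖G‖ := by
  have hn0 : (0:ℝ) < (n:ℝ) := by exact_mod_cast hn
  have h1 : ‖((((n:ℝ)/cc : ℝ)):ℂ)^(w+1)‖ = ((n:ℝ)/cc) ^ (w.re+1) := by
    rw [Complex.norm_cpow_eq_rpow_re_of_pos (by positivity)]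
    norm_num
  rw [norm_mul, norm_mul, norm_inv, h1, norm_pow, Complex.norm_real, Real.norm_eq_abs,
    abs_of_pos hcc, Real.div_rpow hn0.le hcc.le, Real.rpow_neg hn0.le]
  have e1 : (0:ℝ) < (n:ℝ)^(w.re+1) := Real.rpow_pos_of_pos hn0 _
  have e2 : (0:ℝ) < cc^(w.re+1) := Real.rpow_pos_of_pos hcc _
  have e3 : (0:ℝ) < cc^n := pow_pos hcc n
  field_simp

lemma D_eq {z cA : ℂ} (hz : z ≠ 0) (hcA : cA ≠ 0) {μ ν : ℂ} (Wa Wb sgn : ℂ) :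
    sgn * Wa + Wb = cA * ((z^(μ+1))⁻¹ *
      (sgn * (z^(μ+1) * Wa / cA) + z^(μ-ν) * (z^(ν+1) * Wb / cA))) := by
  have h1 : z^(μ+1) ≠ 0 := by rw [Ne, Complex.cpow_eq_zero_iff]; tauto
  have h2 : z^(ν+1) ≠ 0 := by rw [Ne, Complex.cpow_eq_zero_iff]; tauto
  have hsub : z^(μ-ν) = z^(μ+1) / z^(ν+1) := by
    rw [← Complex.cpow_sub _ _ hz]
    ring_nf
  rw [hsub]
  field_simp

lemma rpow_geom_tendsto_zero {s : ℝ} (hs0 : 0 ≤ s) (hs1 : s < 1) (G : ℝ) :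
    Tendsto (fun n : ℕ => (n:ℝ)^G * s^n) atTop (𝓝 0) := by
  have h1 := tendsto_pow_const_mul_const_pow_of_lt_one (⌈max G 0⌉₊) hs0 hs1
  refine squeeze_zero' ?_ ?_ h1
  · filter_upwards with n
    positivity
  · filter_upwards [eventually_ge_atTop 1] with n hn
    have hn1 : (1:ℝ) ≤ (n:ℝ) := by exact_mod_cast hn
    have hle : (n:ℝ)^G ≤ (n:ℝ)^(⌈max G 0⌉₊ : ℕ) := by
      calc (n:ℝ)^G ≤ (n:ℝ)^((⌈max G 0⌉₊ : ℝ)) :=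
            Real.rpow_le_rpow_of_exponent_le hn1 ((le_max_left _ _).trans (Nat.le_ceil _))
        _ = (n:ℝ)^(⌈max G 0⌉₊ : ℕ) := by rw [Real.rpow_natCast]
    exact mul_le_mul_of_nonneg_right hle (pow_nonneg hs0 n)

lemma ev_small {p q C₀ ε E F : ℝ} (hq0 : 0 ≤ q) (hqp : q < p) (hC : 0 ≤ C₀) (hε : 0 < ε) :
    ∀ᶠ n : ℕ in atTop, C₀ * q^n * (n:ℝ)^E ≤ ε * (p^n * (n:ℝ)^F) := by
  have hp : 0 < p := lt_of_le_of_lt hq0 hqp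
  have hT := (rpow_geom_tendsto_zero (div_nonneg hq0 hp.le) ((div_lt_one hp).mpr hqp)
    (E - F)).const_mul C₀
  rw [mul_zero] at hT
  filter_upwards [hT.eventually_le_const hε, eventually_ge_atTop 1] with n hev hn
  have hn0 : (0:ℝ) < (n:ℝ) := by exact_mod_cast hn
  have hid : C₀ * q^n * (n:ℝ)^E = (C₀ * ((n:ℝ)^(E-F) * (q/p)^n)) * (p^n * (n:ℝ)^F) := by
    have h1 : (q/p)^n * p^n = q^n := by rw [div_pow]; field_simp
    have h2 : (n:ℝ)^(E-F) * (n:ℝ)^F = (n:ℝ)^E := by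
      rw [← Real.rpow_add hn0]; ring_nf
    calc C₀ * q^n * (n:ℝ)^E = C₀ * ((q/p)^n * p^n) * ((n:ℝ)^(E-F) * (n:ℝ)^F) := by
          rw [h1, h2]
      _ = (C₀ * ((n:ℝ)^(E-F) * (q/p)^n)) * (p^n * (n:ℝ)^F) := by ring
  rw [hid]
  exact mul_le_mul_of_nonneg_right hev (by positivity)

lemma ev_small' {p C₀ ε E F : ℝ} (hp : 0 < p) (hC : 0 ≤ C₀) (hε : 0 < ε) (hEF : E < F) :
    ∀ᶠ n : ℕ in atTop, C₀ * p^n * (n:ℝ)^E ≤ ε * (p^n * (n:ℝ)^F) := by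
  have hT : Tendsto (fun n : ℕ => C₀ * (n:ℝ)^(E-F)) atTop (𝓝 0) := by
    have := (tendsto_rpow_neg_atTop (show 0 < F - E by linarith)).comp
      (tendsto_natCast_atTop_atTop (R := ℝ))
    have h2 := this.const_mul C₀
    rw [mul_zero] at h2
    refine h2.congr fun n => ?_
    simp only [Function.comp]
    rw [neg_sub]
  filter_upwards [hT.eventually_le_const hε, eventually_ge_atTop 1] with n hev hn
  have hn0 : (0:ℝ) < (n:ℝ) := by exact_mod_cast hn
  have hid : C₀ * p^n * (n:ℝ)^E = (C₀ * (n:ℝ)^(E-F)) * (p^n * (n:ℝ)^F) := by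
    have h2 : (n:ℝ)^(E-F) * (n:ℝ)^F = (n:ℝ)^E := by
      rw [← Real.rpow_add hn0]; ring_nf
    calc C₀ * p^n * (n:ℝ)^E = C₀ * p^n * ((n:ℝ)^(E-F) * (n:ℝ)^F) := by rw [h2]
      _ = (C₀ * (n:ℝ)^(E-F)) * (p^n * (n:ℝ)^F) := by ring
  rw [hid]
  exact mul_le_mul_of_nonneg_right hev (by positivity)

lemma tri {A Mm B : ℂ} : ‖B‖ - ‖A‖ - ‖Mm‖ ≤ ‖A + Mm + B‖ := by
  have h1 : ‖B‖ ≤ ‖A + Mm + B‖ + ‖A + Mm‖ := by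
    calc ‖B‖ = ‖(A + Mm + B) - (A + Mm)‖ := by ring_nf
      _ ≤ ‖A + Mm + B‖ + ‖A + Mm‖ := norm_sub_le _ _
  have h2 : ‖A + Mm‖ ≤ ‖A‖ + ‖Mm‖ := norm_add_le _ _
  linarith

lemma tri' {A Mm B : ℂ} : ‖A‖ - ‖Mm‖ - ‖B‖ ≤ ‖A + Mm + B‖ := by
  have h1 : ‖A‖ ≤ ‖A + Mm + B‖ + ‖Mm + B‖ := by
    calc ‖A‖ = ‖(A + Mm + B) - (Mm + B)‖ := by ring_nf
      _ ≤ ‖A + Mm + B‖ + ‖Mm + B‖ := norm_sub_le _ _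
  have h2 : ‖Mm + B‖ ≤ ‖Mm‖ + ‖B‖ := norm_add_le _ _
  linarith

lemma tri'' {A Mm B : ℂ} : ‖A + B‖ - ‖Mm‖ ≤ ‖A + Mm + B‖ := by
  have h1 : ‖A + B‖ ≤ ‖A + Mm + B‖ + ‖Mm‖ := by
    calc ‖A + B‖ = ‖(A + Mm + B) - Mm‖ := by ring_nf
      _ ≤ ‖A + Mm + B‖ + ‖Mm‖ := norm_sub_le _ _
  linarith

/-- `|∫_{-a}^b φ(t) t^n dt|^{1/n} → max{a,b}` along a subsequence of indices on which,
in the degenerate case `a = b` and `Re μ = Re ν`, the leading coefficient is bounded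
away from `0`. -/
theorem moment_root_limit
    (a b : ℝ) (ha : 0 < a) (hb : 0 < b) (c : ℝ) (hc : c = max a b)
    (μ ν : ℂ) (hμ : -1 < μ.re) (hν : -1 < ν.re)
    (φ f₁ f₂ : ℝ → ℂ)
    (hint : IntervalIntegrable φ volume (-a) b)
    (hφ₁ : ∀ t ∈ Set.Icc (-a) b, φ t = ((t + a : ℝ) : ℂ) ^ μ * f₁ (t + a))
    (hφ₂ : ∀ t ∈ Set.Icc (-a) b, φ t = ((b - t : ℝ) : ℂ) ^ ν * f₂ (b - t))
    (hf₁0 : f₁ 0 ≠ 0) (hf₂0 : f₂ 0 ≠ 0)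
    (hf₁ : ∃ δ > (0 : ℝ), (∀ t ∈ Set.Icc (0 : ℝ) δ, DifferentiableAt ℝ f₁ t) ∧
          ∃ M : ℝ, ∀ t ∈ Set.Icc (0 : ℝ) δ, ‖deriv f₁ t‖ ≤ M)
    (hf₂ : ∃ δ > (0 : ℝ), (∀ t ∈ Set.Icc (0 : ℝ) δ, DifferentiableAt ℝ f₂ t) ∧
          ∃ M : ℝ, ∀ t ∈ Set.Icc (0 : ℝ) δ, ‖deriv f₂ t‖ ≤ M)
    (N : ℕ → ℕ) (hN : StrictMono N)
    (hnondeg : (a = b ∧ μ.re = ν.re) →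
      ∃ ε > (0 : ℝ), ∀ k : ℕ,
        ε ≤ ‖(-1 : ℂ) ^ (N k) * f₁ 0 * Complex.Gamma (μ + 1) +
              f₂ 0 * Complex.Gamma (ν + 1) * (a : ℂ) ^ (ν - μ) * (N k : ℂ) ^ (μ - ν)‖) :
    Tendsto (fun k : ℕ =>
        ‖∫ t in (-a)..b, φ t * (t : ℂ) ^ (N k)‖ ^ ((N k : ℝ)⁻¹))
      atTop (nhds c) := by
  obtain ⟨δ₁, hδ₁, hdiff₁, -⟩ := hf₁
  obtain ⟨δ₂, hδ₂, hdiff₂, -⟩ := hf₂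
  -- choice of η
  set η : ℝ := (1/2) * min (min δ₁ δ₂) (min a b) with hηdef
  have hminpos : 0 < min (min δ₁ δ₂) (min a b) := lt_min (lt_min hδ₁ hδ₂) (lt_min ha hb)
  have hη0 : 0 < η := by rw [hηdef]; linarith
  have hηa : η < a := by
    have h1 : min (min δ₁ δ₂) (min a b) ≤ a := le_trans (min_le_right _ _) (min_le_left _ _)
    rw [hηdef]; linarith
  have hηb : η < b := by
    have h1 : min (min δ₁ δ₂) (min a b) ≤ b := le_trans (min_le_right _ _) (min_le_right _ _)
    rw [hηdef]; linarith
  have hηδ₁ : η ≤ δ₁ := by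
    have h1 : min (min δ₁ δ₂) (min a b) ≤ δ₁ := le_trans (min_le_left _ _) (min_le_left _ _)
    rw [hηdef]; linarith
  have hηδ₂ : η ≤ δ₂ := by
    have h1 : min (min δ₁ δ₂) (min a b) ≤ δ₂ := le_trans (min_le_left _ _) (min_le_right _ _)
    rw [hηdef]; linarith
  have hcont₁ : ∀ t ∈ Set.Icc (0:ℝ) η, ContinuousAt f₁ t :=
    fun t ht => (hdiff₁ t ⟨ht.1, ht.2.trans hηδ₁⟩).continuousAt
  have hcont₂ : ∀ t ∈ Set.Icc (0:ℝ) η, ContinuousAt f₂ t :=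
    fun t ht => (hdiff₂ t ⟨ht.1, ht.2.trans hηδ₂⟩).continuousAt
  have hcpos : 0 < c := by rw [hc]; exact lt_of_lt_of_le ha (le_max_left _ _)
  have hac : a ≤ c := hc ▸ le_max_left _ _
  have hbc : b ≤ c := hc ▸ le_max_right _ _
  -- endpoint integrals
  set Wa : ℕ → ℂ := fun n => ∫ s in (0:ℝ)..η, (s:ℂ) ^ μ * f₁ s * (((a - s : ℝ)) : ℂ) ^ n
    with hWadef
  set Wb : ℕ → ℂ := fun n => ∫ s in (0:ℝ)..η, (s:ℂ) ^ ν * f₂ s * (((b - s : ℝ)) : ℂ) ^ n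
    with hWbdef
  set Sa : ℕ → ℂ := fun n => (((n : ℝ) / a : ℝ) : ℂ) ^ (μ + 1) * Wa n / (a:ℂ) ^ n with hSadef
  set Sb : ℕ → ℂ := fun n => (((n : ℝ) / b : ℝ) : ℂ) ^ (ν + 1) * Wb n / (b:ℂ) ^ n with hSbdef
  set La : ℂ := f₁ 0 * Complex.Gamma (μ + 1) with hLadef
  set Lb : ℂ := f₂ 0 * Complex.Gamma (ν + 1) with hLbdef
  have hSaLim : Tendsto Sa atTop (𝓝 La) := by
    simp only [hSadef, hWadef, hLadef]
    exact watson hμ hη0 hηa hcont₁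
  have hSbLim : Tendsto Sb atTop (𝓝 Lb) := by
    simp only [hSbdef, hWbdef, hLbdef]
    exact watson hν hη0 hηb hcont₂
  have hLa0 : 0 < ‖La‖ := by
    rw [hLadef, norm_pos_iff]
    exact mul_ne_zero hf₁0 (Complex.Gamma_ne_zero_of_re_pos (by simp; linarith))
  have hLb0 : 0 < ‖Lb‖ := by
    rw [hLbdef, norm_pos_iff]
    exact mul_ne_zero hf₂0 (Complex.Gamma_ne_zero_of_re_pos (by simp; linarith))
  have hWaEq : ∀ n : ℕ, 1 ≤ n →
      ‖Wa n‖ = a^(μ.re+1) * (a^n * (n:ℝ)^(-(μ.re+1))) * ‖Sa n‖ := by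
    intro n hn
    conv_lhs => rw [W_eq (w := μ) ha hn (Wa n)]
    rw [norm_scale ha hn]
  have hWbEq : ∀ n : ℕ, 1 ≤ n →
      ‖Wb n‖ = b^(ν.re+1) * (b^n * (n:ℝ)^(-(ν.re+1))) * ‖Sb n‖ := by
    intro n hn
    conv_lhs => rw [W_eq (w := ν) hb hn (Wb n)]
    rw [norm_scale hb hn]
  -- splitting the integral
  have hii : ∀ n : ℕ, IntervalIntegrable (fun t => φ t * (t:ℂ)^n) volume (-a) b :=
    fun n => hint.mul_continuousOn ((Complex.continuous_ofReal.pow n).continuousOn)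
  have hsubii : ∀ (n:ℕ) (p q : ℝ), -a ≤ p → p ≤ q → q ≤ b →
      IntervalIntegrable (fun t => φ t * (t:ℂ)^n) volume p q := by
    intro n p q h1 h2 h3
    apply (hii n).mono_set
    rw [Set.uIcc_of_le h2, Set.uIcc_of_le (by linarith : -a ≤ b)]
    exact Set.Icc_subset_Icc h1 h3
  have hsplit : ∀ n : ℕ, (∫ t in (-a)..b, φ t * (t:ℂ)^n)
      = (∫ t in (-a)..(-a+η), φ t * (t:ℂ)^n) + (∫ t in (-a+η)..(b-η), φ t * (t:ℂ)^n)
        + (∫ t in (b-η)..b, φ t * (t:ℂ)^n) := by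
    intro n
    have e1 := intervalIntegral.integral_add_adjacent_intervals
      (hsubii n (-a) (-a+η) le_rfl (by linarith) (by linarith))
      (hsubii n (-a+η) (b-η) (by linarith) (by linarith) (by linarith))
    have e2 := intervalIntegral.integral_add_adjacent_intervals
      (hsubii n (-a) (b-η) le_rfl (by linarith) (by linarith))
      (hsubii n (b-η) b (by linarith) (by linarith) le_rfl)
    rw [← e2, ← e1]
  have hpieceA : ∀ n : ℕ, (∫ t in (-a)..(-a+η), φ t * (t:ℂ)^n) = (-1:ℂ)^n * Wa n := by
    intro n
    have h0 := intervalIntegral.integral_comp_sub_right (a := 0) (b := η)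
      (fun t => φ t * (t:ℂ)^n) a
    simp only [zero_sub] at h0
    rw [show -a + η = η - a from by ring, ← h0]
    simp only [hWadef]
    rw [← intervalIntegral.integral_const_mul]
    apply intervalIntegral.integral_congr
    intro x hx
    rw [Set.uIcc_of_le hη0.le] at hx
    have hmem : x - a ∈ Set.Icc (-a) b := ⟨by linarith [hx.1], by linarith [hx.2]⟩
    simp only
    rw [hφ₁ _ hmem, show x - a + a = x from by ring,
      show ((x - a : ℝ):ℂ) = -(((a - x:ℝ)):ℂ) from by push_cast; ring, neg_pow]
    ring
  have hpieceB : ∀ n : ℕ, (∫ t in (b-η)..b, φ t * (t:ℂ)^n) = Wb n := by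
    intro n
    have h0 := intervalIntegral.integral_comp_sub_left (a := 0) (b := η)
      (fun t => φ t * (t:ℂ)^n) b
    simp only [sub_zero] at h0
    rw [← h0]
    simp only [hWbdef]
    apply intervalIntegral.integral_congr
    intro x hx
    rw [Set.uIcc_of_le hη0.le] at hx
    have hmem : b - x ∈ Set.Icc (-a) b := ⟨by linarith [hx.2], by linarith [hx.1]⟩
    simp only
    rw [hφ₂ _ hmem, show b - (b - x) = x from by ring]
  -- bounds for the middle part and the full integral
  set Cφ : ℝ := ∫ t in (-a)..b, ‖φ t‖ with hCφdef
  have hCφ0 : 0 ≤ Cφ := by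
    rw [hCφdef]
    exact intervalIntegral.integral_nonneg (by linarith) (fun t _ => norm_nonneg _)
  set r : ℝ := max (a - η) (b - η) with hrdef
  have hr0 : 0 < r := lt_of_lt_of_le (by linarith : (0:ℝ) < a - η) (le_max_left _ _)
  have hrc : r < c := by
    rw [hc, hrdef]
    exact max_lt (lt_of_lt_of_le (by linarith) (le_max_left a b))
      (lt_of_lt_of_le (by linarith) (le_max_right a b))
  have hnormbd : ∀ (n : ℕ) (p q R : ℝ), -a ≤ p → p ≤ q → q ≤ b → (∀ x ∈ Set.Icc p q, |x| ≤ R) →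
      0 ≤ R → ‖∫ t in p..q, φ t * (t:ℂ)^n‖ ≤ Cφ * R^n := by
    intro n p q R h1 h2 h3 hR hR0
    have hstep1 : ‖∫ t in p..q, φ t * (t:ℂ)^n‖ ≤ ∫ t in p..q, ‖φ t * (t:ℂ)^n‖ :=
      intervalIntegral.norm_integral_le_integral_norm h2
    have hstep2 : (∫ t in p..q, ‖φ t * (t:ℂ)^n‖) ≤ ∫ t in p..q, ‖φ t‖ * R^n := by
      apply intervalIntegral.integral_mono_on h2 ((hsubii n p q h1 h2 h3).norm)
        (((hint.norm).mono_set (by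
          rw [Set.uIcc_of_le h2, Set.uIcc_of_le (by linarith : -a ≤ b)]
          exact Set.Icc_subset_Icc h1 h3)).mul_const _)
      intro x hx
      rw [norm_mul, norm_pow, Complex.norm_real, Real.norm_eq_abs]
      have h4 : |x|^n ≤ R^n := pow_le_pow_left₀ (abs_nonneg x) (hR x hx) n
      exact mul_le_mul_of_nonneg_left h4 (norm_nonneg _)
    have hstep3 : (∫ t in p..q, ‖φ t‖ * R^n) = (∫ t in p..q, ‖φ t‖) * R^n :=
      intervalIntegral.integral_mul_const _ _
    have hstep4 : (∫ t in p..q, ‖φ t‖) ≤ Cφ := by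
      rw [hCφdef]
      exact intervalIntegral.integral_mono_interval h1 h2 h3
        (ae_of_all _ fun t => norm_nonneg _) hint.norm
    have hRn : (0:ℝ) ≤ R^n := pow_nonneg hR0 n
    calc ‖∫ t in p..q, φ t * (t:ℂ)^n‖ ≤ (∫ t in p..q, ‖φ t‖) * R^n := by
          rw [← hstep3]; exact le_trans hstep1 hstep2
      _ ≤ Cφ * R^n := mul_le_mul_of_nonneg_right hstep4 hRn
  have hmid : ∀ n : ℕ, ‖∫ t in (-a+η)..(b-η), φ t * (t:ℂ)^n‖ ≤ Cφ * r^n := by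
    intro n
    apply hnormbd n _ _ r (by linarith) (by linarith) (by linarith) _ hr0.le
    intro x hx
    rw [abs_le]
    constructor
    · have : a - η ≤ r := le_max_left _ _
      linarith [hx.1]
    · have : b - η ≤ r := le_max_right _ _
      linarith [hx.2]
  have hIub : ∀ n : ℕ, ‖∫ t in (-a)..b, φ t * (t:ℂ)^n‖ ≤ Cφ * c^n := by
    intro n
    apply hnormbd n _ _ c le_rfl (by linarith) le_rfl _ hcpos.le
    intro x hx
    rw [abs_le]
    exact ⟨by linarith [hx.1], by linarith [hx.2]⟩
  have hNtop : Tendsto N atTop atTop := hN.tendsto_atTop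
  -- reduce to a lower bound
  suffices h : ∃ K κ : ℝ, 0 < κ ∧ ∀ᶠ k in atTop,
      κ * c^(N k) * ((N k : ℝ))^(-K) ≤ ‖∫ t in (-a)..b, φ t * (t:ℂ)^(N k)‖ by
    obtain ⟨K, κ, hκ, hlow⟩ := h
    have hup : ∀ᶠ k in atTop, ‖∫ t in (-a)..b, φ t * (t:ℂ)^(N k)‖ ≤ (Cφ+1) * c^(N k) := by
      filter_upwards with k
      have h1 := hIub (N k)
      nlinarith [pow_pos hcpos (N k)]
    exact root_squeeze hcpos hκ (by linarith) hN hlow hup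
  -- eventual bounds on the normalized quantities
  have hSaUb : ∀ᶠ n in atTop, ‖Sa n‖ ≤ ‖La‖ + 1 :=
    hSaLim.norm.eventually (eventually_le_nhds (lt_add_one _))
  have hSbUb : ∀ᶠ n in atTop, ‖Sb n‖ ≤ ‖Lb‖ + 1 :=
    hSbLim.norm.eventually (eventually_le_nhds (lt_add_one _))
  have hSaLb : ∀ᶠ n in atTop, ‖La‖/2 ≤ ‖Sa n‖ :=
    hSaLim.norm.eventually (eventually_ge_nhds (by linarith))
  have hSbLb : ∀ᶠ n in atTop, ‖Lb‖/2 ≤ ‖Sb n‖ :=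
    hSbLim.norm.eventually (eventually_ge_nhds (by linarith))
  rcases lt_trichotomy a b with hab | hab | hab
  · -- a < b : the right endpoint dominates
    have hcb : c = b := by rw [hc, max_eq_right hab.le]
    refine ⟨ν.re + 1, ‖Lb‖/4 * b^(ν.re+1), by positivity, ?_⟩
    have hE1 := ev_small (p := b) (q := a) (E := -(μ.re+1)) (F := -(ν.re+1))
      (C₀ := a^(μ.re+1) * (‖La‖+1)) (ε := ‖Lb‖/8 * b^(ν.re+1)) ha.le hab
      (by positivity) (by positivity)
    have hE2 := ev_small (p := b) (q := r) (E := 0) (F := -(ν.re+1))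
      (C₀ := Cφ) (ε := ‖Lb‖/8 * b^(ν.re+1)) hr0.le (hcb ▸ hrc) hCφ0 (by positivity)
    filter_upwards [hNtop.eventually hE1, hNtop.eventually hE2, hNtop.eventually hSbLb, hNtop.eventually hSaUb, hNtop.eventually (eventually_ge_atTop 1)] with k h1 h2 h3 h4 hn
    set n := N k with hndef
    simp only [Real.rpow_zero, mul_one] at h2
    rw [hsplit n, hpieceA n, hpieceB n, hcb]
    refine le_trans ?_ tri
    have hA : ‖(-1:ℂ)^n * Wa n‖ = ‖Wa n‖ := by
      rw [norm_mul, norm_pow, norm_neg, norm_one, one_pow, one_mul]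
    have hWaB : ‖Wa n‖ ≤ ‖Lb‖/8 * b^(ν.re+1) * (b^n * (n:ℝ)^(-(ν.re+1))) := by
      rw [hWaEq n hn]
      calc a^(μ.re+1) * (a^n * (n:ℝ)^(-(μ.re+1))) * ‖Sa n‖
          ≤ a^(μ.re+1) * (a^n * (n:ℝ)^(-(μ.re+1))) * (‖La‖+1) :=
            mul_le_mul_of_nonneg_left h4 (by positivity)
        _ = a^(μ.re+1) * (‖La‖+1) * a^n * (n:ℝ)^(-(μ.re+1)) := by ring
        _ ≤ ‖Lb‖/8 * b^(ν.re+1) * (b^n * (n:ℝ)^(-(ν.re+1))) := h1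
    have hWbB : b^(ν.re+1) * (b^n * (n:ℝ)^(-(ν.re+1))) * (‖Lb‖/2) ≤ ‖Wb n‖ := by
      rw [hWbEq n hn]
      exact mul_le_mul_of_nonneg_left h3 (by positivity)
    have hM : ‖∫ t in (-a+η)..(b-η), φ t * (t:ℂ)^n‖ ≤ ‖Lb‖/8 * b^(ν.re+1) * (b^n * (n:ℝ)^(-(ν.re+1))) :=
      le_trans (hmid n) h2
    have egoal : ‖Lb‖/4 * b^(ν.re+1) * b^n * (n:ℝ)^(-(ν.re+1))
        = b^(ν.re+1) * (b^n * (n:ℝ)^(-(ν.re+1))) * (‖Lb‖/2)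
          - ‖Lb‖/8 * b^(ν.re+1) * (b^n * (n:ℝ)^(-(ν.re+1)))
          - ‖Lb‖/8 * b^(ν.re+1) * (b^n * (n:ℝ)^(-(ν.re+1))) := by ring
    rw [egoal]
    linarith only [hWaB, hWbB, hM, hA]
  · -- a = b
    subst hab
    have hca : c = a := by rw [hc, max_self]
    rcases lt_trichotomy μ.re ν.re with hre | hre | hre
    · -- left endpoint dominates
      refine ⟨μ.re + 1, ‖La‖/4 * a^(μ.re+1), by positivity, ?_⟩
      have hE1 := ev_small' (p := a) (E := -(ν.re+1)) (F := -(μ.re+1))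
        (C₀ := a^(ν.re+1) * (‖Lb‖+1)) (ε := ‖La‖/8 * a^(μ.re+1)) ha
        (by positivity) (by positivity) (by linarith)
      have hE2 := ev_small (p := a) (q := r) (E := 0) (F := -(μ.re+1))
        (C₀ := Cφ) (ε := ‖La‖/8 * a^(μ.re+1)) hr0.le (hca ▸ hrc) hCφ0 (by positivity)
      filter_upwards [hNtop.eventually hE1, hNtop.eventually hE2, hNtop.eventually hSaLb, hNtop.eventually hSbUb, hNtop.eventually (eventually_ge_atTop 1)] with k h1 h2 h3 h4 hn
      set n := N k with hndef
      simp only [Real.rpow_zero, mul_one] at h2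
      rw [hsplit n, hpieceA n, hpieceB n, hca]
      refine le_trans ?_ tri'
      have hA : ‖(-1:ℂ)^n * Wa n‖ = ‖Wa n‖ := by
        rw [norm_mul, norm_pow, norm_neg, norm_one, one_pow, one_mul]
      have hWbB : ‖Wb n‖ ≤ ‖La‖/8 * a^(μ.re+1) * (a^n * (n:ℝ)^(-(μ.re+1))) := by
        rw [hWbEq n hn]
        calc a^(ν.re+1) * (a^n * (n:ℝ)^(-(ν.re+1))) * ‖Sb n‖
            ≤ a^(ν.re+1) * (a^n * (n:ℝ)^(-(ν.re+1))) * (‖Lb‖+1) :=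
              mul_le_mul_of_nonneg_left h4 (by positivity)
          _ = a^(ν.re+1) * (‖Lb‖+1) * a^n * (n:ℝ)^(-(ν.re+1)) := by ring
          _ ≤ ‖La‖/8 * a^(μ.re+1) * (a^n * (n:ℝ)^(-(μ.re+1))) := h1
      have hWaB : a^(μ.re+1) * (a^n * (n:ℝ)^(-(μ.re+1))) * (‖La‖/2) ≤ ‖Wa n‖ := by
        rw [hWaEq n hn]
        exact mul_le_mul_of_nonneg_left h3 (by positivity)
      have hM : ‖∫ t in (-a+η)..(a-η), φ t * (t:ℂ)^n‖ ≤ ‖La‖/8 * a^(μ.re+1) * (a^n * (n:ℝ)^(-(μ.re+1))) :=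
        le_trans (hmid n) h2
      have egoal : ‖La‖/4 * a^(μ.re+1) * a^n * (n:ℝ)^(-(μ.re+1))
          = a^(μ.re+1) * (a^n * (n:ℝ)^(-(μ.re+1))) * (‖La‖/2)
            - ‖La‖/8 * a^(μ.re+1) * (a^n * (n:ℝ)^(-(μ.re+1)))
            - ‖La‖/8 * a^(μ.re+1) * (a^n * (n:ℝ)^(-(μ.re+1))) := by ring
      rw [egoal]
      linarith only [hWaB, hWbB, hM, hA]
    · -- degenerate case
      obtain ⟨ε, hε, hbd⟩ := hnondeg ⟨rfl, hre⟩
      refine ⟨μ.re + 1, ε/4 * a^(μ.re+1), by positivity, ?_⟩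
      have hevSa : ∀ᶠ n in atTop, ‖Sa n - La‖ ≤ ε/4 := by
        have h1 : Tendsto (fun n => ‖Sa n - La‖) atTop (𝓝 0) := by
          have := (hSaLim.sub_const La).norm
          simpa using this
        exact h1.eventually_le_const (by positivity)
      have hevSb : ∀ᶠ n in atTop, ‖Sb n - Lb‖ ≤ ε/4 := by
        have h1 : Tendsto (fun n => ‖Sb n - Lb‖) atTop (𝓝 0) := by
          have := (hSbLim.sub_const Lb).norm
          simpa using this
        exact h1.eventually_le_const (by positivity)
      have hzn : ∀ n:ℕ, 1 ≤ n → ‖((((n:ℝ)/a : ℝ)):ℂ)^(μ-ν)‖ = 1 := by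
        intro n hn
        have hn0 : (0:ℝ) < (n:ℝ) := by exact_mod_cast hn
        rw [Complex.norm_cpow_eq_rpow_re_of_pos (by positivity),
          Complex.sub_re, hre, sub_self, Real.rpow_zero]
      have hzsplit : ∀ n:ℕ, 1 ≤ n → ((((n:ℝ)/a : ℝ)):ℂ)^(μ-ν)
          = ((n:ℝ):ℂ)^(μ-ν) * ((a:ℝ):ℂ)^(ν-μ) := by
        intro n hn
        rw [div_eq_mul_inv, Complex.ofReal_mul, Complex.mul_cpow_ofReal_nonneg (Nat.cast_nonneg n)
          (inv_nonneg.mpr ha.le), Complex.ofReal_inv,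
          Complex.inv_cpow _ _ (by rw [Complex.arg_ofReal_of_nonneg ha.le]; exact Real.pi_ne_zero.symm),
          ← Complex.cpow_neg, neg_sub]
      have hGn : ∀ᶠ k in atTop, ε/2 ≤
          ‖(-1:ℂ)^(N k) * Sa (N k) + (((((N k):ℝ)/a : ℝ)):ℂ)^(μ-ν) * Sb (N k)‖ := by
        filter_upwards [hNtop.eventually hevSa, hNtop.eventually hevSb,
          hNtop.eventually (eventually_ge_atTop 1)] with k h1 h2 hk1
        have hH : ε ≤ ‖(-1:ℂ)^(N k) * La + (((((N k):ℝ)/a : ℝ)):ℂ)^(μ-ν) * Lb‖ := by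
          have hb' := hbd k
          have he : (-1:ℂ)^(N k) * La + (((((N k):ℝ)/a : ℝ)):ℂ)^(μ-ν) * Lb
              = (-1 : ℂ) ^ (N k) * f₁ 0 * Complex.Gamma (μ + 1) +
                f₂ 0 * Complex.Gamma (ν + 1) * (a : ℂ) ^ (ν - μ) * (N k : ℂ) ^ (μ - ν) := by
            rw [hzsplit (N k) hk1, hLadef, hLbdef]
            push_cast
            ring
          rw [he]
          exact hb'
        have hGH : ‖((-1:ℂ)^(N k) * Sa (N k) + (((((N k):ℝ)/a : ℝ)):ℂ)^(μ-ν) * Sb (N k))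
            - ((-1:ℂ)^(N k) * La + (((((N k):ℝ)/a : ℝ)):ℂ)^(μ-ν) * Lb)‖ ≤ ε/4 + ε/4 := by
          have he2 : ((-1:ℂ)^(N k) * Sa (N k) + (((((N k):ℝ)/a : ℝ)):ℂ)^(μ-ν) * Sb (N k))
              - ((-1:ℂ)^(N k) * La + (((((N k):ℝ)/a : ℝ)):ℂ)^(μ-ν) * Lb)
              = (-1:ℂ)^(N k) * (Sa (N k) - La)
                + (((((N k):ℝ)/a : ℝ)):ℂ)^(μ-ν) * (Sb (N k) - Lb) := by ring
          rw [he2]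
          calc ‖(-1:ℂ)^(N k) * (Sa (N k) - La)
                + (((((N k):ℝ)/a : ℝ)):ℂ)^(μ-ν) * (Sb (N k) - Lb)‖
              ≤ ‖(-1:ℂ)^(N k) * (Sa (N k) - La)‖
                + ‖(((((N k):ℝ)/a : ℝ)):ℂ)^(μ-ν) * (Sb (N k) - Lb)‖ := norm_add_le _ _
            _ = ‖Sa (N k) - La‖ + ‖Sb (N k) - Lb‖ := by
                rw [norm_mul, norm_mul, hzn (N k) hk1, norm_pow, norm_neg, norm_one,
                  one_pow, one_mul, one_mul]
            _ ≤ ε/4 + ε/4 := add_le_add h1 h2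
        have habs := abs_norm_sub_norm_le
          ((-1:ℂ)^(N k) * Sa (N k) + (((((N k):ℝ)/a : ℝ)):ℂ)^(μ-ν) * Sb (N k))
          ((-1:ℂ)^(N k) * La + (((((N k):ℝ)/a : ℝ)):ℂ)^(μ-ν) * Lb)
        have hneg := neg_le_abs (‖(-1:ℂ)^(N k) * Sa (N k) + (((((N k):ℝ)/a : ℝ)):ℂ)^(μ-ν) * Sb (N k)‖
          - ‖(-1:ℂ)^(N k) * La + (((((N k):ℝ)/a : ℝ)):ℂ)^(μ-ν) * Lb‖)
        linarith only [hH, hGH, habs, hneg]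
      have hE2 := ev_small (p := a) (q := r) (E := 0) (F := -(μ.re+1))
        (C₀ := Cφ) (ε := ε/4 * a^(μ.re+1)) hr0.le (hca ▸ hrc) hCφ0 (by positivity)
      filter_upwards [hGn, hNtop.eventually hE2,
        hNtop.eventually (eventually_ge_atTop 1)] with k hG hE2' hk1
      simp only [Real.rpow_zero, mul_one] at hE2'
      rw [hsplit (N k), hpieceA (N k), hpieceB (N k), hca]
      refine le_trans ?_ tri''
      have hDeq : (-1:ℂ)^(N k) * Wa (N k) + Wb (N k)
          = ((a:ℝ):ℂ)^(N k) * ((((((N k):ℝ)/a : ℝ):ℂ)^(μ+1))⁻¹ *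
            ((-1:ℂ)^(N k) * Sa (N k) + (((((N k):ℝ)/a : ℝ)):ℂ)^(μ-ν) * Sb (N k))) := by
        simp only [hSadef, hSbdef]
        have hz : ((((N k):ℝ)/a : ℝ):ℂ) ≠ 0 := by
          rw [Complex.ofReal_ne_zero]
          have : (0:ℝ) < ((N k):ℝ) := by exact_mod_cast hk1
          positivity
        have hcA : ((a:ℝ):ℂ)^(N k) ≠ 0 := pow_ne_zero _ (Complex.ofReal_ne_zero.mpr ha.ne')
        exact D_eq hz hcA _ _ _
      have hDnorm : ‖(-1:ℂ)^(N k) * Wa (N k) + Wb (N k)‖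
          = a^(μ.re+1) * (a^(N k) * ((N k:ℝ))^(-(μ.re+1))) *
            ‖(-1:ℂ)^(N k) * Sa (N k) + (((((N k):ℝ)/a : ℝ)):ℂ)^(μ-ν) * Sb (N k)‖ := by
        rw [hDeq, ← mul_assoc]
        exact norm_scale ha hk1 _
      have hDlb : a^(μ.re+1) * (a^(N k) * ((N k:ℝ))^(-(μ.re+1))) * (ε/2)
          ≤ ‖(-1:ℂ)^(N k) * Wa (N k) + Wb (N k)‖ := by
        rw [hDnorm]
        exact mul_le_mul_of_nonneg_left hG (by positivity)
      have hM : ‖∫ t in (-a+η)..(a-η), φ t * (t:ℂ)^(N k)‖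
          ≤ ε/4 * a^(μ.re+1) * (a^(N k) * ((N k:ℝ))^(-(μ.re+1))) :=
        le_trans (hmid (N k)) hE2'
      have egoal : ε/4 * a^(μ.re+1) * a^(N k) * ((N k:ℝ))^(-(μ.re+1))
          = a^(μ.re+1) * (a^(N k) * ((N k:ℝ))^(-(μ.re+1))) * (ε/2)
            - ε/4 * a^(μ.re+1) * (a^(N k) * ((N k:ℝ))^(-(μ.re+1))) := by ring
      rw [egoal]
      linarith only [hDlb, hM]
    · -- right endpoint dominates
      refine ⟨ν.re + 1, ‖Lb‖/4 * a^(ν.re+1), by positivity, ?_⟩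
      have hE1 := ev_small' (p := a) (E := -(μ.re+1)) (F := -(ν.re+1))
        (C₀ := a^(μ.re+1) * (‖La‖+1)) (ε := ‖Lb‖/8 * a^(ν.re+1)) ha
        (by positivity) (by positivity) (by linarith)
      have hE2 := ev_small (p := a) (q := r) (E := 0) (F := -(ν.re+1))
        (C₀ := Cφ) (ε := ‖Lb‖/8 * a^(ν.re+1)) hr0.le (hca ▸ hrc) hCφ0 (by positivity)
      filter_upwards [hNtop.eventually hE1, hNtop.eventually hE2, hNtop.eventually hSbLb, hNtop.eventually hSaUb, hNtop.eventually (eventually_ge_atTop 1)] with k h1 h2 h3 h4 hn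
      set n := N k with hndef
      simp only [Real.rpow_zero, mul_one] at h2
      rw [hsplit n, hpieceA n, hpieceB n, hca]
      refine le_trans ?_ tri
      have hA : ‖(-1:ℂ)^n * Wa n‖ = ‖Wa n‖ := by
        rw [norm_mul, norm_pow, norm_neg, norm_one, one_pow, one_mul]
      have hWaB : ‖Wa n‖ ≤ ‖Lb‖/8 * a^(ν.re+1) * (a^n * (n:ℝ)^(-(ν.re+1))) := by
        rw [hWaEq n hn]
        calc a^(μ.re+1) * (a^n * (n:ℝ)^(-(μ.re+1))) * ‖Sa n‖
            ≤ a^(μ.re+1) * (a^n * (n:ℝ)^(-(μ.re+1))) * (‖La‖+1) :=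
              mul_le_mul_of_nonneg_left h4 (by positivity)
          _ = a^(μ.re+1) * (‖La‖+1) * a^n * (n:ℝ)^(-(μ.re+1)) := by ring
          _ ≤ ‖Lb‖/8 * a^(ν.re+1) * (a^n * (n:ℝ)^(-(ν.re+1))) := h1
      have hWbB : a^(ν.re+1) * (a^n * (n:ℝ)^(-(ν.re+1))) * (‖Lb‖/2) ≤ ‖Wb n‖ := by
        rw [hWbEq n hn]
        exact mul_le_mul_of_nonneg_left h3 (by positivity)
      have hM : ‖∫ t in (-a+η)..(a-η), φ t * (t:ℂ)^n‖ ≤ ‖Lb‖/8 * a^(ν.re+1) * (a^n * (n:ℝ)^(-(ν.re+1))) :=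
        le_trans (hmid n) h2
      have egoal : ‖Lb‖/4 * a^(ν.re+1) * a^n * (n:ℝ)^(-(ν.re+1))
          = a^(ν.re+1) * (a^n * (n:ℝ)^(-(ν.re+1))) * (‖Lb‖/2)
            - ‖Lb‖/8 * a^(ν.re+1) * (a^n * (n:ℝ)^(-(ν.re+1)))
            - ‖Lb‖/8 * a^(ν.re+1) * (a^n * (n:ℝ)^(-(ν.re+1))) := by ring
      rw [egoal]
      linarith only [hWaB, hWbB, hM, hA]
  · -- b < a : the left endpoint dominates
    have hca : c = a := by rw [hc, max_eq_left hab.le]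
    refine ⟨μ.re + 1, ‖La‖/4 * a^(μ.re+1), by positivity, ?_⟩
    have hE1 := ev_small (p := a) (q := b) (E := -(ν.re+1)) (F := -(μ.re+1))
      (C₀ := b^(ν.re+1) * (‖Lb‖+1)) (ε := ‖La‖/8 * a^(μ.re+1)) hb.le hab
      (by positivity) (by positivity)
    have hE2 := ev_small (p := a) (q := r) (E := 0) (F := -(μ.re+1))
      (C₀ := Cφ) (ε := ‖La‖/8 * a^(μ.re+1)) hr0.le (hca ▸ hrc) hCφ0 (by positivity)
    filter_upwards [hNtop.eventually hE1, hNtop.eventually hE2, hNtop.eventually hSaLb, hNtop.eventually hSbUb, hNtop.eventually (eventually_ge_atTop 1)] with k h1 h2 h3 h4 hn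
    set n := N k with hndef
    simp only [Real.rpow_zero, mul_one] at h2
    rw [hsplit n, hpieceA n, hpieceB n, hca]
    refine le_trans ?_ tri'
    have hA : ‖(-1:ℂ)^n * Wa n‖ = ‖Wa n‖ := by
      rw [norm_mul, norm_pow, norm_neg, norm_one, one_pow, one_mul]
    have hWbB : ‖Wb n‖ ≤ ‖La‖/8 * a^(μ.re+1) * (a^n * (n:ℝ)^(-(μ.re+1))) := by
      rw [hWbEq n hn]
      calc b^(ν.re+1) * (b^n * (n:ℝ)^(-(ν.re+1))) * ‖Sb n‖
          ≤ b^(ν.re+1) * (b^n * (n:ℝ)^(-(ν.re+1))) * (‖Lb‖+1) :=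
            mul_le_mul_of_nonneg_left h4 (by positivity)
        _ = b^(ν.re+1) * (‖Lb‖+1) * b^n * (n:ℝ)^(-(ν.re+1)) := by ring
        _ ≤ ‖La‖/8 * a^(μ.re+1) * (a^n * (n:ℝ)^(-(μ.re+1))) := h1
    have hWaB : a^(μ.re+1) * (a^n * (n:ℝ)^(-(μ.re+1))) * (‖La‖/2) ≤ ‖Wa n‖ := by
      rw [hWaEq n hn]
      exact mul_le_mul_of_nonneg_left h3 (by positivity)
    have hM : ‖∫ t in (-a+η)..(b-η), φ t * (t:ℂ)^n‖ ≤ ‖La‖/8 * a^(μ.re+1) * (a^n * (n:ℝ)^(-(μ.re+1))) :=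
      le_trans (hmid n) h2
    have egoal : ‖La‖/4 * a^(μ.re+1) * a^n * (n:ℝ)^(-(μ.re+1))
        = a^(μ.re+1) * (a^n * (n:ℝ)^(-(μ.re+1))) * (‖La‖/2)
          - ‖La‖/8 * a^(μ.re+1) * (a^n * (n:ℝ)^(-(μ.re+1)))
          - ‖La‖/8 * a^(μ.re+1) * (a^n * (n:ℝ)^(-(μ.re+1))) := by ring
    rw [egoal]
    linarith only [hWaB, hWbB, hM, hA]
end

section
/- For every angle θ ∈ [0, 2π) there exists a unique r > 0 such that r e^{iθ} lies on the curve D_{a,b} = {z : Re z ≤ 0, |z| ≤ 1/c, |c z e^{1 + a z}| = 1} ∪ {z : Re z ≥ 0, |z| ≤ 1/c, |c z e^{1 - b z}| = 1}, where a, b > 0 and c = max{a, b}. -/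
open Complex

/-- Key analytic lemma: for `0 ≤ α ≤ c`, the function `r ↦ c r e^{1-αr}` is strictly
increasing on `[0, 1/c]`, vanishes at `0` and is `≥ 1` at `1/c`, hence takes the value `1`
exactly once on `(0, 1/c]`. -/
lemma limit_curve_key (c α : ℝ) (hc : 0 < c) (hα0 : 0 ≤ α) (hαc : α ≤ c) :
    ∃! r : ℝ, 0 < r ∧ r ≤ 1 / c ∧ c * r * Real.exp (1 - α * r) = 1 := by
  set F : ℝ → ℝ := fun r => c * r * Real.exp (1 - α * r) with hF
  have hcont : Continuous F := by fun_prop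
  have hmono : StrictMonoOn F (Set.Icc 0 (1 / c)) := by
    apply strictMonoOn_of_deriv_pos (convex_Icc _ _) hcont.continuousOn
    intro x hx
    rw [interior_Icc] at hx
    have hx0 : 0 < x := hx.1
    have hx1 : α * x < 1 := by
      calc α * x ≤ c * x := by nlinarith
        _ < c * (1 / c) := mul_lt_mul_of_pos_left hx.2 hc
        _ = 1 := by field_simp
    have hder : HasDerivAt F
        (c * Real.exp (1 - α * x) + (c * x) * (Real.exp (1 - α * x) * (-α))) x := by
      have h1 : HasDerivAt (fun r : ℝ => 1 - α * r) (-α) x := by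
        simpa using ((hasDerivAt_id x).const_mul α).const_sub 1
      have h2 := h1.exp
      have h3 : HasDerivAt (fun r : ℝ => c * r) c x := by
        simpa using (hasDerivAt_id x).const_mul c
      exact h3.mul h2
    rw [hder.deriv]
    have hE : 0 < Real.exp (1 - α * x) := Real.exp_pos _
    nlinarith [mul_pos (mul_pos hc hE) (by linarith : (0:ℝ) < 1 - α * x)]
  have hF0 : F 0 = 0 := by simp [hF]
  have hF1 : 1 ≤ F (1 / c) := by
    have he : F (1 / c) = Real.exp (1 - α * (1 / c)) := by
      rw [hF]; field_simp
    rw [he]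
    apply Real.one_le_exp
    have : α * (1 / c) ≤ 1 := by
      rw [mul_one_div]; exact (div_le_one hc).2 hαc
    linarith
  obtain ⟨r, hrmem, hrF⟩ :=
    intermediate_value_Icc (by positivity : (0:ℝ) ≤ 1 / c) hcont.continuousOn
      ⟨by rw [hF0]; norm_num, hF1⟩
  have hr0 : 0 < r := by
    rcases eq_or_lt_of_le hrmem.1 with h | h
    · exfalso; rw [← h, hF0] at hrF; norm_num at hrF
    · exact h
  refine ⟨r, ⟨hr0, hrmem.2, hrF⟩, ?_⟩
  rintro r' ⟨h0', h1', hF'⟩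
  exact hmono.injOn ⟨h0'.le, h1'⟩ ⟨hrmem.1, hrmem.2⟩ (hF'.trans hrF.symm)

lemma limit_curve_abs_plus (c d : ℝ) (hc : 0 ≤ c) (z : ℂ) :
    ‖(↑c * z * Complex.exp (1 + ↑d * z))‖
      = c * ‖z‖ * Real.exp (1 + d * z.re) := by
  rw [norm_mul, norm_mul, Complex.norm_of_nonneg hc, Complex.norm_exp]
  simp [Complex.add_re, Complex.mul_re]

lemma limit_curve_abs_minus (c d : ℝ) (hc : 0 ≤ c) (z : ℂ) :
    ‖(↑c * z * Complex.exp (1 - ↑d * z))‖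
      = c * ‖z‖ * Real.exp (1 - d * z.re) := by
  rw [norm_mul, norm_mul, Complex.norm_of_nonneg hc, Complex.norm_exp]
  simp [Complex.sub_re, Complex.mul_re]

/-- Each ray from the origin meets the limit curve `D_{a,b}` in exactly one point. -/
theorem limit_curve_crosses_each_ray_once
    (a b : ℝ) (ha : 0 < a) (hb : 0 < b) (c : ℝ) (hc : c = max a b)
    (D : Set ℂ)
    (hD : D = {z : ℂ | z.re ≤ 0 ∧ ‖z‖ ≤ 1 / c ∧
                 ‖(c * z * Complex.exp (1 + a * z))‖ = 1} ∪
              {z : ℂ | 0 ≤ z.re ∧ ‖z‖ ≤ 1 / c ∧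
                 ‖(c * z * Complex.exp (1 - b * z))‖ = 1}) :
    ∀ θ ∈ Set.Ico (0 : ℝ) (2 * Real.pi),
      ∃! r : ℝ, 0 < r ∧ (r : ℂ) * Complex.exp (θ * Complex.I) ∈ D := by
  intro θ _hθ
  have hc0 : 0 < c := by rw [hc]; exact lt_max_of_lt_left ha
  have zre : ∀ r : ℝ, ((r : ℂ) * Complex.exp (θ * Complex.I)).re = r * Real.cos θ := by
    intro r
    simp [Complex.mul_re, Complex.exp_ofReal_mul_I_re]
  have zabs : ∀ r : ℝ, 0 < r →
      ‖((r : ℂ) * Complex.exp (θ * Complex.I))‖ = r := by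
    intro r hr
    rw [norm_mul, Complex.norm_of_nonneg hr.le, Complex.norm_exp_ofReal_mul_I, mul_one]
  rcases le_or_gt (Real.cos θ) 0 with ht | ht
  · -- left part of the curve
    set α := a * (-Real.cos θ) with hα
    have hα0 : 0 ≤ α := mul_nonneg ha.le (by linarith)
    have hαc : α ≤ c := by
      have h1 : -Real.cos θ ≤ 1 := by linarith [Real.neg_one_le_cos θ]
      calc α ≤ a * 1 := mul_le_mul_of_nonneg_left h1 ha.le
        _ = a := mul_one a
        _ ≤ c := hc ▸ le_max_left a b
    obtain ⟨r, ⟨hr0, hrle, hreq⟩, huniq⟩ := limit_curve_key c α hc0 hα0 hαc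
    refine ⟨r, ⟨hr0, ?_⟩, ?_⟩
    · rw [hD]; left
      refine ⟨?_, ?_, ?_⟩
      · rw [zre]; exact mul_nonpos_of_nonneg_of_nonpos hr0.le ht
      · rw [zabs r hr0]; exact hrle
      · rw [limit_curve_abs_plus c a hc0.le, zabs r hr0, zre]
        have e : (1 : ℝ) + a * (r * Real.cos θ) = 1 - α * r := by rw [hα]; ring
        rw [e]; exact hreq
    · rintro r' ⟨hr'0, hmem⟩
      rw [hD] at hmem
      apply huniq
      rcases hmem with ⟨hre', habs', heq'⟩ | ⟨hre', habs', heq'⟩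
      · refine ⟨hr'0, ?_, ?_⟩
        · rwa [zabs r' hr'0] at habs'
        · rw [limit_curve_abs_plus c a hc0.le, zabs r' hr'0, zre] at heq'
          have e : (1 : ℝ) - α * r' = 1 + a * (r' * Real.cos θ) := by rw [hα]; ring
          rw [e]; exact heq'
      · rw [zre] at hre'
        have hcos0 : Real.cos θ = 0 := by
          refine le_antisymm ht ?_
          by_contra h
          push_neg at h
          nlinarith [mul_neg_of_pos_of_neg hr'0 h]
        refine ⟨hr'0, ?_, ?_⟩
        · rwa [zabs r' hr'0] at habs'
        · rw [limit_curve_abs_minus c b hc0.le, zabs r' hr'0, zre, hcos0] at heq'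
          have e : (1 : ℝ) - α * r' = 1 - b * (r' * 0) := by rw [hα, hcos0]; ring
          rw [e]; exact heq'
  · -- right part of the curve
    set α := b * Real.cos θ with hα
    have hα0 : 0 ≤ α := mul_nonneg hb.le ht.le
    have hαc : α ≤ c := by
      have h1 : Real.cos θ ≤ 1 := Real.cos_le_one θ
      calc α ≤ b * 1 := mul_le_mul_of_nonneg_left h1 hb.le
        _ = b := mul_one b
        _ ≤ c := hc ▸ le_max_right a b
    obtain ⟨r, ⟨hr0, hrle, hreq⟩, huniq⟩ := limit_curve_key c α hc0 hα0 hαc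
    refine ⟨r, ⟨hr0, ?_⟩, ?_⟩
    · rw [hD]; right
      refine ⟨?_, ?_, ?_⟩
      · rw [zre]; exact mul_nonneg hr0.le ht.le
      · rw [zabs r hr0]; exact hrle
      · rw [limit_curve_abs_minus c b hc0.le, zabs r hr0, zre]
        have e : (1 : ℝ) - b * (r * Real.cos θ) = 1 - α * r := by rw [hα]; ring
        rw [e]; exact hreq
    · rintro r' ⟨hr'0, hmem⟩
      rw [hD] at hmem
      apply huniq
      rcases hmem with ⟨hre', habs', heq'⟩ | ⟨hre', habs', heq'⟩
      · exfalso
        rw [zre] at hre'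
        nlinarith [mul_pos hr'0 ht]
      · refine ⟨hr'0, ?_, ?_⟩
        · rwa [zabs r' hr'0] at habs'
        · rw [limit_curve_abs_minus c b hc0.le, zabs r' hr'0, zre] at heq'
          have e : (1 : ℝ) - α * r' = 1 - b * (r' * Real.cos θ) := by rw [hα]; ring
          rw [e]; exact heq'
end

section
/- Let D = {z ∈ ℂ : |z| ≤ 1 and |z e^{1-z}| = 1} be the Szegő curve. Then for every θ ∈ [0, 2π) there is a unique r ∈ (0, 1] with r e^{iθ} ∈ D, and the function r(θ) satisfies r(0) = 1 and r(π) equal to the unique solution in (0,1) of r e^{1+r} = 1. -/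
open Complex

private lemma gMono (c : ℝ) (hc : c ≤ 1) :
    StrictMonoOn (fun r : ℝ => r * Real.exp (1 - c * r)) (Set.Icc 0 1) := by
  apply strictMonoOn_of_deriv_pos (convex_Icc 0 1)
  · exact (continuous_id.mul (Real.continuous_exp.comp (by continuity))).continuousOn
  · intro x hx
    rw [interior_Icc] at hx
    have hd : HasDerivAt (fun r : ℝ => r * Real.exp (1 - c * r))
        (Real.exp (1 - c * x) * (1 - c * x)) x := by
      have h1 : HasDerivAt (fun r : ℝ => 1 - c * r) (-c) x := by
        simpa using ((hasDerivAt_id x).const_mul c).const_sub 1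
      have : HasDerivAt (fun r : ℝ => r * Real.exp (1 - c * r))
          (1 * Real.exp (1 - c * x) + x * (Real.exp (1 - c * x) * -c)) x :=
        (hasDerivAt_id x).mul h1.exp
      convert this using 1
      ring
    rw [hd.deriv]
    have hcx : c * x < 1 := by
      rcases le_or_gt c 0 with h | h
      · nlinarith [hx.1, hx.2]
      · nlinarith [hx.1, hx.2]
    exact mul_pos (Real.exp_pos _) (by linarith)

private lemma gExists (c : ℝ) (hc : c ≤ 1) :
    ∃ r ∈ Set.Ioc (0:ℝ) 1, r * Real.exp (1 - c * r) = 1 := by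
  have hcont : ContinuousOn (fun r : ℝ => r * Real.exp (1 - c * r)) (Set.Icc 0 1) :=
    (continuous_id.mul (Real.continuous_exp.comp (by continuity))).continuousOn
  have hsub := intermediate_value_Icc (by norm_num : (0:ℝ) ≤ 1) hcont
  have h1mem : (1:ℝ) ∈ Set.Icc ((fun r : ℝ => r * Real.exp (1 - c * r)) 0)
      ((fun r : ℝ => r * Real.exp (1 - c * r)) 1) := by
    constructor
    · simp
    · have : (1:ℝ) ≤ Real.exp (1 - c * 1) := Real.one_le_exp (by linarith)
      simpa using this
  obtain ⟨r, hr, hreq⟩ := hsub h1mem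
  refine ⟨r, ⟨?_, hr.2⟩, hreq⟩
  rcases lt_or_eq_of_le hr.1 with h | h
  · exact h
  · exfalso; rw [← h] at hreq; simp at hreq

private lemma gUnique (c : ℝ) (hc : c ≤ 1) :
    ∃! r : ℝ, r ∈ Set.Ioc (0:ℝ) 1 ∧ r * Real.exp (1 - c * r) = 1 := by
  obtain ⟨r, hr, hreq⟩ := gExists c hc
  refine ⟨r, ⟨hr, hreq⟩, ?_⟩
  rintro s ⟨hs, hseq⟩
  exact (gMono c hc).injOn ⟨hs.1.le, hs.2⟩ ⟨hr.1.le, hr.2⟩ (by rw [hseq, hreq])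

private lemma habsD (r θ : ℝ) (hr : r ∈ Set.Ioc (0:ℝ) 1) (D : Set ℂ)
    (hD : D = {z : ℂ | ‖z‖ ≤ 1 ∧ ‖z * Complex.exp (1 - z)‖ = 1}) :
    ((r : ℂ) * Complex.exp (θ * Complex.I) ∈ D)
      ↔ r * Real.exp (1 - r * Real.cos θ) = 1 := by
  have habs1 : ‖(r : ℂ) * Complex.exp (θ * Complex.I)‖ = r := by
    rw [norm_mul, Complex.norm_exp_ofReal_mul_I, Complex.norm_real, Real.norm_eq_abs, _root_.abs_of_nonneg hr.1.le,
      mul_one]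
  have hre : ((1 : ℂ) - (r : ℂ) * Complex.exp (θ * Complex.I)).re = 1 - r * Real.cos θ := by
    simp [Complex.sub_re, Complex.mul_re, Complex.exp_ofReal_mul_I_re,
      Complex.exp_ofReal_mul_I_im]
  have habs2 : ‖(r : ℂ) * Complex.exp (θ * Complex.I) *
      Complex.exp (1 - (r : ℂ) * Complex.exp (θ * Complex.I))‖
      = r * Real.exp (1 - r * Real.cos θ) := by
    rw [norm_mul, habs1, Complex.norm_exp, hre]
  rw [hD]
  simp only [Set.mem_setOf_eq, habs1, habs2]
  constructor
  · rintro ⟨-, h⟩; exact h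
  · intro h; exact ⟨hr.2, h⟩

/-- The Szegő curve `D = {|z| ≤ 1, |z e^{1-z}| = 1}` meets each ray from the origin in a
unique point `r(θ) e^{iθ}` with `r(θ) ∈ (0,1]`; moreover `r(0) = 1` and `r(π)` is the
unique solution in `(0,1)` of `r e^{1+r} = 1`. -/
theorem szego_curve_ray_parametrization
    (D : Set ℂ)
    (hD : D = {z : ℂ | ‖z‖ ≤ 1 ∧ ‖z * Complex.exp (1 - z)‖ = 1}) :
    (∀ θ ∈ Set.Ico (0 : ℝ) (2 * Real.pi),
      ∃! r : ℝ, r ∈ Set.Ioc (0 : ℝ) 1 ∧ (r : ℂ) * Complex.exp (θ * Complex.I) ∈ D) ∧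
    ((1 : ℂ) ∈ D ∧ ∀ r ∈ Set.Ioc (0 : ℝ) 1, ((r : ℂ) ∈ D ↔ r = 1)) ∧
    (∃! r : ℝ, r ∈ Set.Ioo (0 : ℝ) 1 ∧ r * Real.exp (1 + r) = 1) ∧
    (∀ r ∈ Set.Ioc (0 : ℝ) 1,
      ((r : ℂ) * Complex.exp (Real.pi * Complex.I) ∈ D ↔ r * Real.exp (1 + r) = 1)) := by
  refine ⟨?_, ⟨?_, ?_⟩, ?_, ?_⟩
  · intro θ _
    obtain ⟨r, ⟨hr, hreq⟩, huniq⟩ := gUnique (Real.cos θ) (Real.cos_le_one θ)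
    have hcomm : ∀ s : ℝ, 1 - Real.cos θ * s = 1 - s * Real.cos θ := fun s => by ring
    refine ⟨r, ⟨hr, (habsD r θ hr D hD).2 (by rw [← hcomm]; exact hreq)⟩, ?_⟩
    rintro s ⟨hs, hsD⟩
    exact huniq s ⟨hs, by rw [hcomm]; exact (habsD s θ hs D hD).1 hsD⟩
  · rw [hD]
    constructor
    · simp
    · have : (1 : ℂ) - 1 = 0 := by ring
      simp [this]
  · intro r hr
    have key : (r : ℂ) ∈ D ↔ r * Real.exp (1 - r * Real.cos 0) = 1 := by
      have := habsD r 0 hr D hD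
      simpa using this
    rw [key, Real.cos_zero]
    simp only [mul_one]
    constructor
    · intro h
      have h1 : (1:ℝ) * Real.exp (1 - 1 * 1) = 1 := by simp
      exact (gMono 1 le_rfl).injOn ⟨hr.1.le, hr.2⟩ (by norm_num) (by simp only [one_mul]; rw [h]; norm_num)
    · intro h; subst h; simp
  · obtain ⟨r, ⟨hr, hreq⟩, huniq⟩ := gUnique (-1) (by norm_num)
    have hform : ∀ s : ℝ, s * Real.exp (1 - (-1) * s) = s * Real.exp (1 + s) := by
      intro s; ring_nf
    have hne1 : r ≠ 1 := by
      intro h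
      rw [h, hform] at hreq
      have : (1:ℝ) < Real.exp (1 + 1) := Real.one_lt_exp_iff.2 (by norm_num)
      nlinarith
    refine ⟨r, ⟨⟨hr.1, lt_of_le_of_ne hr.2 hne1⟩, by rw [← hform]; exact hreq⟩, ?_⟩
    rintro s ⟨hs, hseq⟩
    exact huniq s ⟨⟨hs.1, hs.2.le⟩, by rw [hform]; exact hseq⟩
  · intro r hr
    have := habsD r Real.pi hr D hD
    rw [Real.cos_pi] at this
    have heq : 1 - r * (-1 : ℝ) = 1 + r := by ring
    rw [heq] at this
    exact this
end

section
/- Let α ∈ ℝ with α > -1/2 and define P_n(z) = Σ_{k=0}^{n/2} n^{2k} / (4^k Γ(k+1) Γ(k+α+1)) · z^k for even n. Then every zero of P_n satisfies |z| ≤ 1 + 2α/n. -/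
open Finset Complex

/-- Zeros of the polynomials `P_n` arising from even sections of Bessel functions
lie in `|z| ≤ 1 + 2α/n`. -/
theorem bessel_section_polynomial_zero_bound
    (α : ℝ) (hα : -(1 / 2) < α)
    (n : ℕ) (hn : Even n) (hn0 : 0 < n)
    (P : ℂ → ℂ)
    (hP : ∀ z : ℂ, P z = ∑ k ∈ range (n / 2 + 1),
      (n : ℂ) ^ (2 * k) /
        (4 ^ k * (k.factorial : ℂ) * (Real.Gamma (k + α + 1) : ℂ)) * z ^ k) :
    ∀ z : ℂ, P z = 0 → ‖z‖ ≤ 1 + 2 * α / n := by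
  intro z hz
  by_contra hcon
  push_neg at hcon
  set m := n / 2 with hm
  have hnm : n = 2 * m := by obtain ⟨r, hr⟩ := hn; omega
  have hm1 : 1 ≤ m := by omega
  have hn2 : (2:ℝ) ≤ (n:ℝ) := by exact_mod_cast (by omega : 2 ≤ n)
  have hnpos : (0:ℝ) < (n:ℝ) := by linarith
  set β : ℝ := 1 + 2 * α / n with hβ
  have hβeq : β = ((n:ℝ) + 2*α)/n := by rw [hβ]; field_simp
  have hβpos : 0 < β := by rw [hβeq]; apply div_pos (by linarith) hnpos
  -- the real coefficients
  set c : ℕ → ℝ := fun k => (n:ℝ)^(2*k) / (4^k * k.factorial * Real.Gamma ((k:ℝ) + α + 1))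
    with hc
  have hgpos : ∀ k : ℕ, 0 < Real.Gamma ((k:ℝ) + α + 1) := by
    intro k
    apply Real.Gamma_pos_of_pos
    have : (0:ℝ) ≤ (k:ℝ) := Nat.cast_nonneg k
    linarith
  have hcpos : ∀ k : ℕ, 0 < c k := by
    intro k
    rw [hc]
    have := hgpos k
    have hf : (0:ℝ) < (k.factorial : ℝ) := by exact_mod_cast k.factorial_pos
    positivity
  -- recurrence
  have hrec : ∀ k : ℕ, c (k+1) * (4*((k:ℝ)+1)*((k:ℝ)+α+1)) = c k * (n:ℝ)^2 := by
    intro k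
    have hkα : (0:ℝ) < (k:ℝ) + α + 1 := by
      have : (0:ℝ) ≤ (k:ℝ) := Nat.cast_nonneg k
      linarith
    have hg : Real.Gamma ((↑(k+1):ℝ) + α + 1) = ((k:ℝ)+α+1) * Real.Gamma ((k:ℝ)+α+1) := by
      have h1 : ((↑(k+1):ℝ) + α + 1) = ((k:ℝ)+α+1) + 1 := by push_cast; ring
      rw [h1, Real.Gamma_add_one (ne_of_gt hkα)]
    have hf : (0:ℝ) < (k.factorial : ℝ) := by exact_mod_cast k.factorial_pos
    have hgp := hgpos k
    simp only [hc, Nat.factorial_succ, hg]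
    push_cast
    field_simp
    ring
  -- monotonicity of ratio
  have hmono : ∀ k, k < m → c k ≤ β * c (k+1) := by
    intro k hk
    have hkm : (k:ℝ) + 1 ≤ (m:ℝ) := by exact_mod_cast (by omega : k + 1 ≤ m)
    have hnr : (n:ℝ) = 2 * m := by exact_mod_cast hnm
    have hD : 4*((k:ℝ)+1)*((k:ℝ)+α+1) ≤ β * (n:ℝ)^2 := by
      have hβn : β * (n:ℝ)^2 = (n:ℝ)^2 + 2*α*n := by
        rw [hβeq]; field_simp
      rw [hβn, hnr]
      have h1 : (0:ℝ) < (k:ℝ) + 1 := by positivity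
      have h2 : (0:ℝ) < (k:ℝ) + α + 1 := by
        have : (0:ℝ) ≤ (k:ℝ) := Nat.cast_nonneg k; linarith
      nlinarith [mul_le_mul hkm (by linarith : (k:ℝ)+α+1 ≤ (m:ℝ)+α) h2.le (by linarith : (0:ℝ) ≤ (m:ℝ))]
    have h1 := hrec k
    have h3 := hcpos (k+1)
    have h4 : (0:ℝ) < (n:ℝ)^2 := by positivity
    nlinarith [mul_le_mul_of_nonneg_left hD h3.le]
  -- the sum vanishes at z
  have hcoeff : ∀ k : ℕ, (n : ℂ) ^ (2 * k) /
      (4 ^ k * (k.factorial : ℂ) * ((Real.Gamma ((k:ℝ) + α + 1) : ℝ) : ℂ)) = ((c k : ℝ) : ℂ) := by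
    intro k
    rw [hc]
    push_cast
    ring
  have hsum : ∑ k ∈ range (m+1), ((c k : ℝ):ℂ) * z ^ k = 0 := by
    have h0 := (hP z).symm.trans hz
    rw [← h0]
    apply Finset.sum_congr rfl
    intro k _
    rw [hcoeff k]
  set b : ℕ → ℝ := fun k => c k * β ^ k with hb
  have hbpos : ∀ k, 0 < b k := fun k => mul_pos (hcpos k) (pow_pos hβpos k)
  have hbmono : ∀ k, k < m → b k ≤ b (k+1) := by
    intro k hk
    simp only [hb, pow_succ]
    have h1 := mul_le_mul_of_nonneg_right (hmono k hk) (pow_nonneg hβpos.le k)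
    nlinarith [h1]
  have hβne : ((β:ℝ):ℂ) ≠ 0 := by exact_mod_cast hβpos.ne'
  set w : ℂ := z / (β:ℝ) with hw
  have hzw : z = ((β:ℝ):ℂ) * w := by rw [hw]; field_simp
  set A : ℝ := ‖w‖ with hA
  have hA1 : 1 < A := by
    rw [hA, hw, norm_div, Complex.norm_real, Real.norm_eq_abs, abs_of_pos hβpos]
    rw [lt_div_iff₀ hβpos]
    linarith
  have hsum' : ∑ k ∈ range (m+1), ((b k : ℝ):ℂ) * w ^ k = 0 := by
    rw [← hsum]
    apply Finset.sum_congr rfl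
    intro k _
    rw [hzw, mul_pow]
    simp only [hb]
    push_cast
    ring
  -- telescoping identity
  have key : ((b m:ℝ):ℂ) * w^(m+1) =
      (b 0:ℝ) + ∑ k ∈ range m, (((b (k+1) - b k):ℝ):ℂ) * w^(k+1) := by
    have e1 : ∑ k ∈ range (m+1), ((b k:ℝ):ℂ) * w^(k+1)
        = ∑ k ∈ range (m+1), ((b k:ℝ):ℂ) * w^k := by
      have h2 : ∑ k ∈ range (m+1), ((b k:ℝ):ℂ)*w^(k+1)
          = w * ∑ k ∈ range (m+1), ((b k:ℝ):ℂ)*w^k := by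
        rw [Finset.mul_sum]; apply Finset.sum_congr rfl; intro k _; ring
      rw [h2, hsum', mul_zero]
    rw [Finset.sum_range_succ (fun k => ((b k:ℝ):ℂ)*w^(k+1)) m,
        Finset.sum_range_succ' (fun k => ((b k:ℝ):ℂ)*w^k) m] at e1
    simp only [pow_zero, mul_one] at e1
    have : ∑ k ∈ range m, (((b (k+1) - b k):ℝ):ℂ) * w^(k+1)
        = ∑ k ∈ range m, ((b (k+1):ℝ):ℂ) * w^(k+1) - ∑ k ∈ range m, ((b k:ℝ):ℂ) * w^(k+1) := by
      rw [← Finset.sum_sub_distrib]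
      apply Finset.sum_congr rfl; intro k _; push_cast; ring
    rw [this]
    linear_combination e1
  -- take absolute values
  have habs : b m * A^(m+1) ≤ b 0 + ∑ k ∈ range m, (b (k+1) - b k) * A^(k+1) := by
    have h1 : ‖(((b m:ℝ):ℂ) * w^(m+1))‖ = b m * A^(m+1) := by
      rw [norm_mul, norm_pow, Complex.norm_real, Real.norm_eq_abs, abs_of_pos (hbpos m), hA]
    rw [← h1, key]
    refine (norm_add_le _ _).trans ?_
    have h2 : ‖((b 0:ℝ):ℂ)‖ = b 0 := by
      rw [Complex.norm_real, Real.norm_eq_abs, abs_of_pos (hbpos 0)]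
    rw [h2]
    gcongr
    refine (norm_sum_le _ _).trans ?_
    apply Finset.sum_le_sum
    intro k hk
    rw [norm_mul, norm_pow, Complex.norm_real, Real.norm_eq_abs, ← hA,
        _root_.abs_of_nonneg (by linarith [hbmono k (Finset.mem_range.mp hk)])]
  have habs2 : b 0 + ∑ k ∈ range m, (b (k+1) - b k) * A^(k+1) ≤ b m * A^m := by
    have h1 : b 0 + ∑ k ∈ range m, (b (k+1) - b k) * A^(k+1)
        ≤ b 0 * A^m + ∑ k ∈ range m, (b (k+1) - b k) * A^m := by
      apply add_le_add
      · have hp : (1:ℝ) ≤ A^m := one_le_pow₀ hA1.le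
        nlinarith [hbpos 0]
      · apply Finset.sum_le_sum
        intro k hk
        exact mul_le_mul_of_nonneg_left
          (pow_le_pow_right₀ hA1.le (Nat.succ_le_of_lt (Finset.mem_range.mp hk)))
          (sub_nonneg.mpr (hbmono k (Finset.mem_range.mp hk)))
    have h2 : b 0 * A^m + ∑ k ∈ range m, (b (k+1) - b k) * A^m = b m * A^m := by
      rw [← Finset.sum_mul, Finset.sum_range_sub (fun k => b k)]
      ring
    linarith
  have hlt : A^m < A^(m+1) := pow_lt_pow_right₀ hA1 (Nat.lt_succ_self m)
  nlinarith [hbpos m, habs, habs2]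
end

section
/- Let c_0, c_1, ..., c_m be positive real numbers. Then every complex zero z of the polynomial p(z) = Σ_{k=0}^{m} c_k z^k satisfies min_{0 ≤ k ≤ m-1} (c_k/c_{k+1}) ≤ |z| ≤ max_{0 ≤ k ≤ m-1} (c_k/c_{k+1}). -/
open Finset

lemma ek_key (m : ℕ) (c : ℕ → ℝ) (z : ℂ)
    (hz : ∑ k ∈ range (m + 1), (c k : ℂ) * z ^ k = 0) (t : ℝ) :
    (c m : ℂ) * z ^ (m + 1) =
      ∑ k ∈ range m, ((t * c (k + 1) - c k : ℝ) : ℂ) * z ^ (k + 1) + ((t * c 0 : ℝ) : ℂ) := by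
  have hA : ∑ k ∈ range (m + 1), (c k : ℂ) * z ^ (k + 1) = 0 := by
    have h := congrArg (· * z) hz
    simp only [Finset.sum_mul, zero_mul] at h
    rw [← h]
    exact Finset.sum_congr rfl fun k _ => by ring
  have hB : ∑ k ∈ range (m + 1), (t : ℂ) * ((c k : ℂ) * z ^ k) = 0 := by
    rw [← Finset.mul_sum, hz, mul_zero]
  rw [Finset.sum_range_succ] at hA
  rw [Finset.sum_range_succ'] at hB
  have hsplit : ∑ k ∈ range m, ((t * c (k + 1) - c k : ℝ) : ℂ) * z ^ (k + 1)
      = ∑ k ∈ range m, (t : ℂ) * ((c (k + 1) : ℂ) * z ^ (k + 1))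
        - ∑ k ∈ range m, (c k : ℂ) * z ^ (k + 1) := by
    rw [← Finset.sum_sub_distrib]
    exact Finset.sum_congr rfl fun k _ => by push_cast; ring
  rw [hsplit, Complex.ofReal_mul]
  simp only [pow_zero, mul_one] at hB
  linear_combination hA - hB

theorem enestrom_kakeya
    (m : ℕ) (hm : 0 < m) (c : ℕ → ℝ) (hc : ∀ k ≤ m, 0 < c k)
    (z : ℂ) (hz : ∑ k ∈ range (m + 1), (c k : ℂ) * z ^ k = 0) :
    (range m).inf' (Finset.nonempty_range_iff.mpr hm.ne') (fun k => c k / c (k + 1))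
      ≤ ‖z‖ ∧
    ‖z‖ ≤
      (range m).sup' (Finset.nonempty_range_iff.mpr hm.ne') (fun k => c k / c (k + 1)) := by
  set r := ‖z‖ with hr
  have hne : (range m).Nonempty := Finset.nonempty_range_iff.mpr hm.ne'
  have hr0 : 0 ≤ r := norm_nonneg z
  have hc0 : 0 < c 0 := hc 0 (Nat.zero_le m)
  have hcm : 0 < c m := hc m le_rfl
  constructor
  · -- lower bound
    set α := (range m).inf' hne (fun k => c k / c (k + 1)) with hα
    by_contra hcon
    push_neg at hcon
    have hαk : ∀ k ∈ range m, α * c (k + 1) ≤ c k := by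
      intro k hk
      have h1 : α ≤ c k / c (k + 1) := Finset.inf'_le (fun k => c k / c (k + 1)) hk
      have h2 : 0 < c (k + 1) := hc (k + 1) (Finset.mem_range.mp hk)
      rw [le_div_iff₀ h2] at h1
      exact h1
    have hα0 : 0 < α := lt_of_le_of_lt hr0 hcon
    have hid := ek_key m c z hz α
    have h1 : ((α * c 0 : ℝ) : ℂ) = (c m : ℂ) * z ^ (m + 1)
        + ∑ k ∈ range m, ((c k - α * c (k + 1) : ℝ) : ℂ) * z ^ (k + 1) := by
      have hzero : ∑ k ∈ range m, (((α * c (k + 1) - c k : ℝ) : ℂ) * z ^ (k + 1)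
          + ((c k - α * c (k + 1) : ℝ) : ℂ) * z ^ (k + 1)) = 0 :=
        Finset.sum_eq_zero fun k _ => by push_cast; ring
      rw [Finset.sum_add_distrib] at hzero
      rw [hid]
      linear_combination -hzero
    have habs : α * c 0 ≤ c m * r ^ (m + 1) + ∑ k ∈ range m, (c k - α * c (k + 1)) * r ^ (k + 1) := by
      have h2 := congrArg norm h1
      rw [Complex.norm_real, Real.norm_eq_abs, abs_of_pos (mul_pos hα0 hc0)] at h2
      calc α * c 0 = norm ((c m : ℂ) * z ^ (m + 1)
            + ∑ k ∈ range m, ((c k - α * c (k + 1) : ℝ) : ℂ) * z ^ (k + 1)) := h2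
        _ ≤ norm ((c m : ℂ) * z ^ (m + 1))
            + norm (∑ k ∈ range m, ((c k - α * c (k + 1) : ℝ) : ℂ) * z ^ (k + 1)) :=
              norm_add_le _ _
        _ ≤ norm ((c m : ℂ) * z ^ (m + 1))
            + ∑ k ∈ range m, norm (((c k - α * c (k + 1) : ℝ) : ℂ) * z ^ (k + 1)) := by
              gcongr
              exact norm_sum_le _ _
        _ = c m * r ^ (m + 1) + ∑ k ∈ range m, (c k - α * c (k + 1)) * r ^ (k + 1) := by
              congr 1
              · rw [norm_mul, norm_pow, Complex.norm_real, Real.norm_eq_abs, abs_of_pos hcm]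
              · refine Finset.sum_congr rfl fun k hk => ?_
                rw [norm_mul, norm_pow, Complex.norm_real, Real.norm_eq_abs,
                  abs_of_nonneg (by linarith [hαk k hk])]
    rcases eq_or_lt_of_le hr0 with h0 | h0
    · have hp : r ^ (m + 1) = 0 := by rw [← h0]; simp
      have hsum0 : ∑ k ∈ range m, (c k - α * c (k + 1)) * r ^ (k + 1) = 0 := by
        refine Finset.sum_eq_zero fun k _ => ?_
        rw [← h0]; simp
      rw [hp, hsum0] at habs
      nlinarith
    · have hterm : ∀ k ∈ range m, (c k - α * c (k + 1)) * r ^ (k + 1)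
          ≤ α * c k * r ^ k - α * c (k + 1) * r ^ (k + 1) := by
        intro k hk
        have h2 : 0 < c k := hc k (Finset.mem_range.mp hk).le
        have h3 : 0 < r ^ k := pow_pos h0 k
        have h4 : c k * r ^ k * r ≤ c k * r ^ k * α :=
          mul_le_mul_of_nonneg_left hcon.le (mul_pos h2 h3).le
        rw [pow_succ]
        nlinarith [h4]
      have hsum : ∑ k ∈ range m, (c k - α * c (k + 1)) * r ^ (k + 1)
          ≤ α * c 0 - α * c m * r ^ m := by
        calc ∑ k ∈ range m, (c k - α * c (k + 1)) * r ^ (k + 1)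
            ≤ ∑ k ∈ range m, (α * c k * r ^ k - α * c (k + 1) * r ^ (k + 1)) :=
              Finset.sum_le_sum hterm
          _ = α * c 0 * r ^ 0 - α * c m * r ^ m :=
              Finset.sum_range_sub' (fun k => α * c k * r ^ k) m
          _ = α * c 0 - α * c m * r ^ m := by rw [pow_zero, mul_one]
      have hlast : c m * r ^ (m + 1) < α * c m * r ^ m := by
        have h3 : 0 < r ^ m := pow_pos h0 m
        have h4 : c m * r ^ m * r < c m * r ^ m * α :=
          mul_lt_mul_of_pos_left hcon (mul_pos hcm h3)
        rw [pow_succ]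
        nlinarith [h4]
      linarith
  · -- upper bound
    set β := (range m).sup' hne (fun k => c k / c (k + 1)) with hβ
    by_contra hcon
    push_neg at hcon
    have hβk : ∀ k ∈ range m, c k ≤ β * c (k + 1) := by
      intro k hk
      have h1 : c k / c (k + 1) ≤ β := Finset.le_sup' (fun k => c k / c (k + 1)) hk
      have h2 : 0 < c (k + 1) := hc (k + 1) (Finset.mem_range.mp hk)
      rw [div_le_iff₀ h2] at h1
      linarith
    have hβ0 : 0 < β := by
      have h1 : c 0 / c 1 ≤ β := Finset.le_sup' (fun k => c k / c (k + 1)) (Finset.mem_range.mpr hm)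
      have hc1 : 0 < c 1 := hc 1 hm
      calc (0:ℝ) < c 0 / c 1 := by positivity
        _ ≤ β := h1
    have hrpos : 0 < r := lt_trans hβ0 hcon
    have hid := ek_key m c z hz β
    have habs : c m * r ^ (m + 1)
        ≤ ∑ k ∈ range m, (β * c (k + 1) - c k) * r ^ (k + 1) + β * c 0 := by
      have h2 := congrArg norm hid
      rw [norm_mul, norm_pow, Complex.norm_real, Real.norm_eq_abs, abs_of_pos hcm] at h2
      calc c m * r ^ (m + 1)
          = norm (∑ k ∈ range m, ((β * c (k + 1) - c k : ℝ) : ℂ) * z ^ (k + 1)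
            + ((β * c 0 : ℝ) : ℂ)) := h2
        _ ≤ norm (∑ k ∈ range m, ((β * c (k + 1) - c k : ℝ) : ℂ) * z ^ (k + 1))
            + norm (((β * c 0 : ℝ) : ℂ)) := norm_add_le _ _
        _ ≤ ∑ k ∈ range m, norm (((β * c (k + 1) - c k : ℝ) : ℂ) * z ^ (k + 1))
            + norm (((β * c 0 : ℝ) : ℂ)) := by
              gcongr
              exact norm_sum_le _ _
        _ = ∑ k ∈ range m, (β * c (k + 1) - c k) * r ^ (k + 1) + β * c 0 := by
              congr 1
              · refine Finset.sum_congr rfl fun k hk => ?_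
                rw [norm_mul, norm_pow, Complex.norm_real, Real.norm_eq_abs,
                  abs_of_nonneg (by linarith [hβk k hk])]
              · rw [Complex.norm_real, Real.norm_eq_abs, abs_of_pos (mul_pos hβ0 hc0)]
    have hterm : ∀ k ∈ range m, (β * c (k + 1) - c k) * r ^ (k + 1)
        < c (k + 1) * r ^ (k + 2) - c k * r ^ (k + 1) := by
      intro k hk
      have h2 : 0 < c (k + 1) := hc (k + 1) (Finset.mem_range.mp hk)
      have h3 : 0 < r ^ (k + 1) := pow_pos hrpos _
      have h4 : c (k + 1) * r ^ (k + 1) * β < c (k + 1) * r ^ (k + 1) * r :=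
        mul_lt_mul_of_pos_left hcon (mul_pos h2 h3)
      have h5 : r ^ (k + 2) = r ^ (k + 1) * r := pow_succ r (k + 1)
      nlinarith [h4]
    have htel : ∑ k ∈ range m, (c (k + 1) * r ^ (k + 2) - c k * r ^ (k + 1))
        = c m * r ^ (m + 1) - c 0 * r := by
      have h := Finset.sum_range_sub (fun k => c k * r ^ (k + 1)) m
      simpa using h
    have hsum : ∑ k ∈ range m, (β * c (k + 1) - c k) * r ^ (k + 1)
        < c m * r ^ (m + 1) - c 0 * r := by
      calc ∑ k ∈ range m, (β * c (k + 1) - c k) * r ^ (k + 1)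
          < ∑ k ∈ range m, (c (k + 1) * r ^ (k + 2) - c k * r ^ (k + 1)) :=
            Finset.sum_lt_sum_of_nonempty hne hterm
        _ = c m * r ^ (m + 1) - c 0 * r := htel
    have hlast : β * c 0 < c 0 * r := by nlinarith [mul_lt_mul_of_pos_left hcon hc0]
    linarith
end
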